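/- arXiv:1912.03870 — 3 statements merged into one kernel-verified Lean document; each statement's English description precedes it below -/
import Mathlib

section
/- For every integer n ≥ 1, one has ∑_{j=1}^{n} C_j · F^j_n = 1/(n+1), where C_j = (−1)^j B_j / j! with B_j the j-th Bernoulli number, and F^j_n denotes the coefficient of x^n in the j-th power of the formal power series f(x) = ∑_{k≥1} x^k/k (i.e. of (−log(1−x))^j) over ℚ. (Lemma 2.3, first identity.) -/
/-- The formal power series `f(x) = ∑_{k ≥ 1} x^k / k = -log(1-x)` over `ℚ`. -/
noncomputable def logSeries : PowerSeries ℚ :=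
  PowerSeries.mk fun k => if k = 0 then 0 else (k : ℚ)⁻¹

/-- `F^j_n`, the coefficient of `x^n` in `f(x)^j`. -/
noncomputable def Fcoeff (j n : ℕ) : ℚ :=
  PowerSeries.coeff n (logSeries ^ j)

/-- `C_j = (-1)^j B_j / j!` where `B_j` is the `j`-th Bernoulli number
(with generating function `z / (e^z - 1)`). -/
noncomputable def Ccoeff (j : ℕ) : ℚ :=
  (-1) ^ j * bernoulli j / (j.factorial : ℚ)

open PowerSeries Finset

lemma coeff_logSeries (m : ℕ) :
    PowerSeries.coeff m logSeries = if m = 0 then 0 else (m : ℚ)⁻¹ := by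
  simp [logSeries]

lemma Fcoeff_eq_zero {j n : ℕ} (h : n < j) : Fcoeff j n = 0 := by
  induction j generalizing n with
  | zero => omega
  | succ j ih =>
    rw [Fcoeff, pow_succ, PowerSeries.coeff_mul]
    apply Finset.sum_eq_zero
    rintro ⟨a, b⟩ hab
    rw [Finset.HasAntidiagonal.mem_antidiagonal] at hab
    rcases lt_or_ge a j with ha | ha
    · have : (PowerSeries.coeff a) (logSeries ^ j) = 0 := ih (by omega)
      simp [this]
    · have hb : b = 0 := by omega
      subst hb
      simp [coeff_logSeries]

lemma coeff_derivative_logSeries (b : ℕ) :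
    PowerSeries.coeff b (PowerSeries.derivative ℚ logSeries) = 1 := by
  rw [PowerSeries.coeff_derivative, coeff_logSeries]
  have : ((b : ℚ) + 1) ≠ 0 := by positivity
  simp only [Nat.succ_ne_zero, if_neg, Nat.add_eq_zero, and_false, ite_false]
  push_cast
  field_simp

/-- cumulative recurrence: (n+1) F^{j+1}_{n+1} = (j+1) ∑_{a ≤ n} F^j_a -/
lemma Fcoeff_cum (j n : ℕ) :
    ((n : ℚ) + 1) * Fcoeff (j+1) (n+1) = ((j : ℚ) + 1) * ∑ a ∈ range (n+1), Fcoeff j a := by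
  have hD := Derivation.leibniz_pow (PowerSeries.derivative ℚ) (a := logSeries) (j+1)
  have h := congrArg (PowerSeries.coeff n) hD
  rw [PowerSeries.coeff_derivative] at h
  have hR : (PowerSeries.coeff n) ((j+1) • logSeries ^ (j+1-1) • (PowerSeries.derivative ℚ) logSeries)
      = ((j : ℚ) + 1) * ∑ a ∈ range (n+1), Fcoeff j a := by
    rw [map_nsmul, smul_eq_mul, PowerSeries.coeff_mul]
    rw [Finset.Nat.sum_antidiagonal_eq_sum_range_succ_mk]
    simp only [Nat.add_sub_cancel, coeff_derivative_logSeries, mul_one]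
    rw [nsmul_eq_mul]
    push_cast
    rfl
  rw [hR] at h
  rw [← h, Fcoeff]
  ring

lemma Fcoeff_rec (j n : ℕ) :
    ((n : ℚ) + 1) * Fcoeff (j+1) (n+1) = (n : ℚ) * Fcoeff (j+1) n + ((j : ℚ) + 1) * Fcoeff j n := by
  rcases n with _ | m
  · have h := Fcoeff_cum j 0
    simp only [Nat.cast_zero, zero_add, one_mul, Finset.range_one, Finset.sum_singleton] at h
    simpa using h
  · have h1 := Fcoeff_cum j (m+1)
    have h2 := Fcoeff_cum j m
    rw [Finset.sum_range_succ (n := m+1)] at h1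
    push_cast at h1 h2 ⊢
    rw [mul_add] at h1
    -- h1 : (m+2) F^{j+1}_{m+2} = (j+1) ∑_{range (m+1)} + (j+1) F^j_{m+1}
    -- h2 : (m+1) F^{j+1}_{m+1} = (j+1) ∑_{range (m+1)}
    rw [← h2] at h1
    linarith [h1]

/-- coefficients of `1 - e^{-z}` -/
noncomputable def bco (k : ℕ) : ℚ := if k = 0 then 0 else (-1)^(k+1) / (k.factorial : ℚ)

lemma Fcoeff_zero_left (n : ℕ) (hn : n ≠ 0) : Fcoeff 0 n = 0 := by
  simp [Fcoeff, PowerSeries.coeff_one, hn]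

lemma Fcoeff_one_one : Fcoeff 1 1 = 1 := by
  simp [Fcoeff, coeff_logSeries]

/-- `exp(-(-log(1-x))) = 1 - x`, coefficient-wise, truncated form. -/
lemma Vsum_eq (n : ℕ) (hn : 1 ≤ n) :
    ∑ i ∈ Finset.range n, bco (i+1) * Fcoeff (i+1) n = if n = 1 then 1 else 0 := by
  induction n, hn using Nat.le_induction with
  | base => simp [bco, Fcoeff_one_one]
  | succ n hn ih =>
    have key : ((n : ℚ) + 1) * ∑ i ∈ Finset.range (n+1), bco (i+1) * Fcoeff (i+1) (n+1)
        = ((n : ℚ) - 1) * ∑ i ∈ Finset.range n, bco (i+1) * Fcoeff (i+1) n := by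
      rw [Finset.mul_sum]
      have step : ∀ i ∈ Finset.range (n+1),
          ((n : ℚ) + 1) * (bco (i+1) * Fcoeff (i+1) (n+1))
          = (n : ℚ) * (bco (i+1) * Fcoeff (i+1) n) + ((-1)^i / (i.factorial : ℚ)) * Fcoeff i n := by
        intro i _
        have h := Fcoeff_rec i n
        have hb : bco (i+1) * ((i : ℚ) + 1) = (-1)^i / (i.factorial : ℚ) := by
          simp only [bco, Nat.succ_ne_zero, if_neg, ite_false, Nat.factorial_succ]
          push_cast
          have h1 : (i.factorial : ℚ) ≠ 0 := Nat.cast_ne_zero.mpr i.factorial_ne_zero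
          have h2 : ((i : ℚ) + 1) ≠ 0 := by positivity
          field_simp
          ring
        calc ((n : ℚ) + 1) * (bco (i+1) * Fcoeff (i+1) (n+1))
            = bco (i+1) * (((n : ℚ) + 1) * Fcoeff (i+1) (n+1)) := by ring
          _ = bco (i+1) * ((n : ℚ) * Fcoeff (i+1) n + ((i : ℚ) + 1) * Fcoeff i n) := by rw [h]
          _ = (n : ℚ) * (bco (i+1) * Fcoeff (i+1) n) + (bco (i+1) * ((i : ℚ) + 1)) * Fcoeff i n := by ring
          _ = _ := by rw [hb]
      rw [Finset.sum_congr rfl step, Finset.sum_add_distrib]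
      have hA : ∑ i ∈ Finset.range (n+1), (n : ℚ) * (bco (i+1) * Fcoeff (i+1) n)
          = (n : ℚ) * ∑ i ∈ Finset.range n, bco (i+1) * Fcoeff (i+1) n := by
        rw [Finset.sum_range_succ, Fcoeff_eq_zero (by omega), mul_zero, mul_zero, add_zero,
          Finset.mul_sum]
      have hB : ∑ i ∈ Finset.range (n+1), ((-1)^i / (i.factorial : ℚ)) * Fcoeff i n
          = - ∑ i ∈ Finset.range n, bco (i+1) * Fcoeff (i+1) n := by
        rw [Finset.sum_range_succ']
        rw [Fcoeff_zero_left n (by omega), mul_zero, add_zero, ← Finset.sum_neg_distrib]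
        apply Finset.sum_congr rfl
        intro i _
        have : ((-1 : ℚ)^(i+1) / ((i+1).factorial : ℚ)) = - bco (i+1) := by
          simp only [bco, Nat.succ_ne_zero, ite_false]
          rw [pow_succ]
          ring
        rw [this]
        ring
      rw [hA, hB]
      ring
    have hne : ((n : ℚ) + 1) ≠ 0 := by positivity
    rw [ih] at key
    have h0 : ((n : ℚ) - 1) * (if n = 1 then 1 else 0) = 0 := by
      rcases eq_or_ne n 1 with h1 | h1 <;> simp [h1]
    rw [h0] at key
    rw [if_neg (show n + 1 ≠ 1 by omega)]
    rcases mul_eq_zero.mp key with h | h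
    · exact absurd h hne
    · exact h

/-- Convolution identity: coefficients of `z/(1-e^{-z}) * (1-e^{-z}) = z`. -/
lemma CI (m : ℕ) :
    ∑ p ∈ Finset.HasAntidiagonal.antidiagonal m, Ccoeff p.1 * bco p.2 = if m = 1 then 1 else 0 := by
  rw [Finset.Nat.sum_antidiagonal_eq_sum_range_succ_mk, Finset.sum_range_succ]
  have hb0 : bco (m - m) = 0 := by simp [bco]
  rw [hb0, mul_zero, add_zero]
  have step : ∀ a ∈ Finset.range m,
      Ccoeff a * bco (m - a) = (-1)^(m+1) / (m.factorial : ℚ) * ((m.choose a : ℚ) * bernoulli a) := by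
    intro a ha
    rw [Finset.mem_range] at ha
    have hma : m - a ≠ 0 := by omega
    have hpow : ((-1 : ℚ))^a * (-1)^(m - a + 1) = (-1)^(m+1) := by
      rw [← pow_add]
      congr 1
      omega
    rw [Ccoeff, bco, if_neg hma, Nat.cast_choose ℚ (by omega : a ≤ m)]
    have h1 : (a.factorial : ℚ) ≠ 0 := Nat.cast_ne_zero.mpr a.factorial_ne_zero
    have h2 : ((m - a).factorial : ℚ) ≠ 0 := Nat.cast_ne_zero.mpr (m - a).factorial_ne_zero
    have h3 : (m.factorial : ℚ) ≠ 0 := Nat.cast_ne_zero.mpr m.factorial_ne_zero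
    have hpow' : ((-1 : ℚ))^a * (-1)^(m - a) = (-1)^m := by
      have := hpow
      rw [pow_succ, pow_succ, ← mul_assoc] at this
      exact mul_right_cancel₀ (by norm_num) this
    field_simp
    linear_combination (- bernoulli a) * hpow'
  rw [Finset.sum_congr rfl step, ← Finset.mul_sum, sum_bernoulli]
  rcases eq_or_ne m 1 with h1 | h1
  · subst h1; norm_num
  · simp [h1]


/-- Lemma 2.3, first identity: `∑_{j=1}^n C_j F^j_n = 1/(n+1)`. -/
theorem sum_Ccoeff_mul_Fcoeff (n : ℕ) (hn : 1 ≤ n) :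
    ∑ j ∈ Finset.Icc 1 n, Ccoeff j * Fcoeff j n = 1 / (n + 1 : ℚ) := by
  classical
  set g : Polynomial ℚ := ∑ j ∈ Finset.range (n+2), Ccoeff j • (Polynomial.X ^ j) with hg
  set e : Polynomial ℚ := ∑ k ∈ Finset.range (n+2), bco k • (Polynomial.X ^ k) with he
  have hgc : ∀ m, g.coeff m = if m < n+2 then Ccoeff m else 0 := by
    intro m
    rw [hg, Polynomial.finset_sum_coeff]
    simp only [Polynomial.coeff_smul, Polynomial.coeff_X_pow, smul_eq_mul, mul_ite, mul_one,
      mul_zero]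
    rw [Finset.sum_ite_eq (Finset.range (n+2)) m Ccoeff]
    simp [Finset.mem_range]
  have hec : ∀ m, e.coeff m = if m < n+2 then bco m else 0 := by
    intro m
    rw [he, Polynomial.finset_sum_coeff]
    simp only [Polynomial.coeff_smul, Polynomial.coeff_X_pow, smul_eq_mul, mul_ite, mul_one,
      mul_zero]
    rw [Finset.sum_ite_eq (Finset.range (n+2)) m bco]
    simp [Finset.mem_range]
  -- the product has coefficients of X (truncated)
  have hCI : ∀ m ≤ n+1, (g * e).coeff m = if m = 1 then 1 else 0 := by
    intro m hm
    rw [Polynomial.coeff_mul, ← CI m]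
    apply Finset.sum_congr rfl
    rintro ⟨a, b⟩ hab
    rw [Finset.HasAntidiagonal.mem_antidiagonal] at hab
    rw [hgc, hec, if_pos (by omega), if_pos (by omega)]
  set S := Polynomial.aeval logSeries g with hS
  set E := Polynomial.aeval logSeries e with hE
  have hScoeff : ∀ m, PowerSeries.coeff m S
      = ∑ j ∈ Finset.range (n+2), Ccoeff j * Fcoeff j m := by
    intro m
    rw [hS, hg, map_sum, map_sum]
    apply Finset.sum_congr rfl
    intro j _
    rw [map_smul, map_smul, Polynomial.aeval_X_pow, smul_eq_mul]
    rfl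
  have hEcoeff : ∀ b, b ≤ n+1 → PowerSeries.coeff b E = if b = 1 then 1 else 0 := by
    intro b hb
    have : PowerSeries.coeff b E = ∑ k ∈ Finset.range (n+2), bco k * Fcoeff k b := by
      rw [hE, he, map_sum, map_sum]
      apply Finset.sum_congr rfl
      intro k _
      rw [map_smul, map_smul, Polynomial.aeval_X_pow, smul_eq_mul]
      rfl
    rw [this]
    have hsub : ∑ k ∈ Finset.range (n+2), bco k * Fcoeff k b
        = ∑ k ∈ Finset.range (b+1), bco k * Fcoeff k b := by
      rw [Finset.sum_subset (Finset.range_subset_range.mpr (by omega : b+1 ≤ n+2))]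
      intro k _ hk
      rw [Finset.mem_range, not_lt] at hk
      rw [Fcoeff_eq_zero (by omega), mul_zero]
    rw [hsub, Finset.sum_range_succ']
    simp only [bco, if_pos rfl, zero_mul, add_zero]
    rcases Nat.eq_zero_or_pos b with hb0 | hb0
    · subst hb0
      simp only [Finset.range_zero, Finset.sum_empty]
      norm_num
    · have := Vsum_eq b hb0
      simp only [bco] at this ⊢
      rw [this]
      norm_num
  -- two evaluations of coeff (n+1) of aeval (g*e)
  have hmul := congrArg (PowerSeries.coeff (n+1)) (map_mul (Polynomial.aeval logSeries) g e)
  -- left side: it is coeff (n+1) of (essentially) X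
  have hleft : PowerSeries.coeff (n+1) (Polynomial.aeval logSeries (g * e))
      = 1 / (n + 1 : ℚ) := by
    rw [Polynomial.aeval_eq_sum_range, map_sum]
    have hterm : ∀ i ∈ Finset.range ((g*e).natDegree + 1), i ≠ 1 →
        PowerSeries.coeff (n+1) ((g*e).coeff i • logSeries ^ i) = 0 := by
      intro i _ hi1
      rw [map_smul, smul_eq_mul]
      rcases le_or_gt i (n+1) with hile | hgt
      · rw [hCI i hile, if_neg hi1, zero_mul]
      · have : PowerSeries.coeff (n+1) (logSeries ^ i) = Fcoeff i (n+1) := rfl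
        rw [this, Fcoeff_eq_zero (by omega), mul_zero]
    rw [Finset.sum_eq_single 1 hterm]
    · rw [map_smul, smul_eq_mul, hCI 1 (by omega), if_pos rfl, one_mul, pow_one,
        coeff_logSeries, if_neg (by omega : n+1 ≠ 0)]
      rw [one_div]
      push_cast
      ring_nf
    · intro h1
      rw [Finset.mem_range, not_lt] at h1
      rw [Polynomial.coeff_eq_zero_of_natDegree_lt (by omega), zero_smul, map_zero]
  -- right side: it is `S_n`
  have hright : PowerSeries.coeff (n+1) (S * E)
      = ∑ j ∈ Finset.range (n+2), Ccoeff j * Fcoeff j n := by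
    rw [PowerSeries.coeff_mul, Finset.Nat.sum_antidiagonal_eq_sum_range_succ_mk]
    rw [Finset.sum_eq_single n]
    · rw [hEcoeff (n+1-n) (by omega), if_pos (by omega), mul_one, hScoeff]
    · intro k hk hkn
      rw [Finset.mem_range] at hk
      rw [hEcoeff (n+1-k) (by omega), if_neg (by omega), mul_zero]
    · intro h
      exact absurd (Finset.mem_range.mpr (by omega)) h
  rw [hleft, hright] at hmul
  -- trim the range (n+2) sum down to Icc 1 n
  have htrim : ∑ j ∈ Finset.range (n+2), Ccoeff j * Fcoeff j n
      = ∑ j ∈ Finset.Icc 1 n, Ccoeff j * Fcoeff j n := by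
    rw [Finset.sum_range_succ, Fcoeff_eq_zero (by omega), mul_zero, add_zero,
      Finset.sum_range_succ', Fcoeff_zero_left n (by omega), mul_zero, add_zero,
      ← Finset.Ico_add_one_right_eq_Icc, Finset.sum_Ico_eq_sum_range]
    simp [add_comm]
  rw [htrim] at hmul
  exact hmul.symm
end

section
/- Let K ≥ 1, let R be a commutative ℚ-algebra and x ∈ R. In the algebra of (K+1)×(K+1) matrices over R with rows and columns indexed by 0,1,…,K, let E_{i,j} denote the matrix units and let J = ∑_{i=1}^{K} E_{i,i−1} be the subdiagonal shift matrix (so J^n = ∑_{j=n}^{K} E_{j,j−n} and J^{K+1} = 0). Then the ordered product (1 + x E_{K,K−1})(1 + x E_{K−1,K−2}) ⋯ (1 + x E_{1,0}) equals exp( ∑_{n=1}^{K} (x^n/n) J^n ), and both sides equal ∑_{k=0}^{K} x^k J^k. (This is the gl-matrix form of equation (2.13) in the proof of Proposition 2.2, under the Lie algebra isomorphism sending the fermionic bilinear b(−j)c(j−n) to E_{j,j−n}; note 1 + xE_{i,i−1} = exp(xE_{i,i−1}) since E_{i,i−1}^2 = 0.) -/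
open Matrix Polynomial

namespace Eq213Aux

variable {K : ℕ} {R : Type*} [CommRing R]

noncomputable def Jm (K : ℕ) (R : Type*) [CommRing R] : Matrix (Fin (K+1)) (Fin (K+1)) R :=
  ∑ i : Fin K, Matrix.single i.succ i.castSucc 1


noncomputable def Pa (K : ℕ) : ℚ[X] := ∑ n ∈ Finset.Icc 1 K, ((n : ℚ)⁻¹) • X ^ n

noncomputable def Ea (K : ℕ) : ℚ[X] :=
  ∑ k ∈ Finset.range (K + 1), ((k.factorial : ℚ)⁻¹) • (Pa K) ^ k

noncomputable def Ga (K : ℕ) : ℚ[X] := ∑ k ∈ Finset.range (K + 1), X ^ k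

lemma X_dvd_Pa (K : ℕ) : X ∣ Pa K := by
  rw [X_dvd_iff, Pa, Polynomial.finset_sum_coeff]
  apply Finset.sum_eq_zero
  intro n hn
  have hn1 : 1 ≤ n := (Finset.mem_Icc.mp hn).1
  rw [Polynomial.coeff_smul, Polynomial.coeff_X_pow, if_neg (by omega)]
  simp

lemma derivative_Pa (K : ℕ) : derivative (Pa K) = ∑ n ∈ Finset.Icc 1 K, X ^ (n - 1) := by
  rw [Pa, map_sum]
  apply Finset.sum_congr rfl
  intro n hn
  have hn1 : 1 ≤ n := (Finset.mem_Icc.mp hn).1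
  have hne : (n : ℚ) ≠ 0 := Nat.cast_ne_zero.mpr (by omega)
  rw [derivative_smul, derivative_X_pow, smul_eq_C_mul, ← mul_assoc, ← C_mul,
    inv_mul_cancel₀ hne, _root_.map_one, one_mul]

lemma coeff_derivative_Pa (K j : ℕ) (hj : j < K) : (derivative (Pa K)).coeff j = 1 := by
  rw [derivative_Pa, Polynomial.finset_sum_coeff]
  rw [Finset.sum_eq_single (j + 1)]
  · simp [Polynomial.coeff_X_pow]
  · intro n hn hne
    have hn1 : 1 ≤ n := (Finset.mem_Icc.mp hn).1
    rw [Polynomial.coeff_X_pow, if_neg (by omega)]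
  · intro h
    exact absurd (Finset.mem_Icc.mpr ⟨by omega, by omega⟩) h

lemma derivative_Ea (K : ℕ) :
    derivative (Ea K) = (∑ k ∈ Finset.range K, ((k.factorial : ℚ)⁻¹) • (Pa K) ^ k)
      * derivative (Pa K) := by
  rw [Ea, map_sum, Finset.sum_range_succ']
  have h0 : derivative (((Nat.factorial 0 : ℚ)⁻¹) • (Pa K) ^ 0) = 0 := by simp
  rw [h0, add_zero, Finset.sum_mul]
  apply Finset.sum_congr rfl
  intro k _
  have hfac : (((k+1).factorial : ℚ))⁻¹ * (((k+1) : ℕ) : ℚ) = ((k.factorial : ℚ))⁻¹ := by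
    rw [Nat.factorial_succ]
    have h1 : ((k:ℚ) + 1) ≠ 0 := by positivity
    have h2 : (k.factorial : ℚ) ≠ 0 := Nat.cast_ne_zero.mpr k.factorial_ne_zero
    push_cast
    field_simp
  rw [derivative_smul, derivative_pow, Nat.add_sub_cancel, smul_eq_C_mul, smul_eq_C_mul,
    ← hfac, C_mul]
  ring

lemma coeff_Pa_pow_eq_zero (K k j : ℕ) (hj : j < k) : ((Pa K) ^ k).coeff j = 0 := by
  have : X ^ k ∣ (Pa K) ^ k := pow_dvd_pow_of_dvd (X_dvd_Pa K) k
  exact (X_pow_dvd_iff.mp this) j hj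

lemma coeff_Ea (K : ℕ) : ∀ m, m ≤ K → (Ea K).coeff m = 1 := by
  intro m
  induction m using Nat.strong_induction_on with
  | _ m ih =>
    intro hm
    match m with
    | 0 =>
      rw [Ea, Polynomial.finset_sum_coeff, Finset.sum_range_succ']
      have h1 : ∀ k ∈ Finset.range K,
          (((Nat.factorial (k + 1) : ℚ)⁻¹) • (Pa K) ^ (k + 1)).coeff 0 = 0 := by
        intro k _
        rw [Polynomial.coeff_smul, coeff_Pa_pow_eq_zero K (k + 1) 0 (by omega)]
        simp
      rw [Finset.sum_congr rfl h1, Finset.sum_const, smul_zero]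
      simp
    | m + 1 =>
      -- use derivative
      have hd : (derivative (Ea K)).coeff m = (m : ℚ) + 1 := by
        rw [derivative_Ea, Polynomial.coeff_mul]
        have hterm : ∀ p ∈ Finset.HasAntidiagonal.antidiagonal m,
            (∑ k ∈ Finset.range K, ((k.factorial : ℚ)⁻¹) • (Pa K) ^ k).coeff p.1
              * (derivative (Pa K)).coeff p.2 = 1 := by
          intro p hp
          have hp' : p.1 + p.2 = m := Finset.HasAntidiagonal.mem_antidiagonal.mp hp
          have h1 : (∑ k ∈ Finset.range K, ((k.factorial : ℚ)⁻¹) • (Pa K) ^ k).coeff p.1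
              = (Ea K).coeff p.1 := by
            rw [Ea, Finset.sum_range_succ, Polynomial.coeff_add, Polynomial.coeff_smul,
              coeff_Pa_pow_eq_zero K K p.1 (by omega), smul_zero, add_zero]
          rw [h1, ih p.1 (by omega) (by omega), coeff_derivative_Pa K p.2 (by omega), mul_one]
        rw [Finset.sum_congr rfl hterm, Finset.sum_const, Finset.Nat.card_antidiagonal]
        
        ring
      have hd2 : (derivative (Ea K)).coeff m = (Ea K).coeff (m + 1) * ((m : ℚ) + 1) :=
        Polynomial.coeff_derivative _ _
      have hne : ((m : ℚ) + 1) ≠ 0 := by positivity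
      have hthis : (Ea K).coeff (m + 1) * ((m : ℚ) + 1) = (m : ℚ) + 1 := hd2.symm.trans hd
      exact mul_right_cancel₀ hne (by rw [hthis, one_mul])

lemma coeff_Ga (K : ℕ) : ∀ m, m ≤ K → (Ga K).coeff m = 1 := by
  intro m hm
  rw [Ga, Polynomial.finset_sum_coeff]
  rw [Finset.sum_eq_single m]
  · simp
  · intro n _ hne
    rw [Polynomial.coeff_X_pow, if_neg (fun h => hne h.symm)]
  · intro h
    exact absurd (Finset.mem_range.mpr (by omega)) h

lemma X_pow_dvd_Ea_sub_Ga (K : ℕ) : X ^ (K + 1) ∣ Ea K - Ga K := by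
  rw [X_pow_dvd_iff]
  intro d hd
  rw [Polynomial.coeff_sub, coeff_Ea K d (by omega), coeff_Ga K d (by omega), sub_self]





lemma Jm_apply (a b : Fin (K+1)) :
    Jm K R a b = if (a : ℕ) = (b : ℕ) + 1 then 1 else 0 := by
  rw [Jm, Matrix.sum_apply]
  by_cases h : (a : ℕ) = (b : ℕ) + 1
  · have hb : (b : ℕ) < K := by omega
    rw [Finset.sum_eq_single (⟨b, hb⟩ : Fin K), if_pos h]
    · rw [Matrix.single, of_apply,
        if_pos ⟨Fin.ext (show (b : ℕ) + 1 = (a : ℕ) from h.symm),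
          Fin.ext (show (b : ℕ) = (b : ℕ) from rfl)⟩]
    · intro i _ hne
      rw [Matrix.single, of_apply, if_neg]
      rintro ⟨h1, h2⟩
      exact hne (Fin.ext (show (i : ℕ) = (b : ℕ) from congrArg Fin.val h2))
    · intro hmem
      exact absurd (Finset.mem_univ _) hmem
  · rw [if_neg h]
    apply Finset.sum_eq_zero
    intro i _
    rw [Matrix.single, of_apply, if_neg]
    rintro ⟨h1, h2⟩
    apply h
    have e1 : (i : ℕ) + 1 = (a : ℕ) := congrArg Fin.val h1
    have e2 : (i : ℕ) = (b : ℕ) := congrArg Fin.val h2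
    omega

lemma Jm_pow_apply (n : ℕ) (a b : Fin (K+1)) :
    (Jm K R ^ n) a b = if (a : ℕ) = (b : ℕ) + n then 1 else 0 := by
  induction n generalizing a b with
  | zero =>
    simp only [pow_zero, Matrix.one_apply, Nat.add_zero]
    by_cases h : a = b
    · rw [if_pos h, if_pos (by rw [h])]
    · rw [if_neg h, if_neg (fun hh => h (Fin.ext hh))]
  | succ n ih =>
    rw [pow_succ, Matrix.mul_apply]
    by_cases hb : (b : ℕ) + 1 < K + 1
    · rw [Finset.sum_eq_single (⟨(b : ℕ) + 1, hb⟩ : Fin (K+1))]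
      · have e1 : (Jm K R) (⟨(b : ℕ) + 1, hb⟩ : Fin (K+1)) b = 1 := by
          rw [Jm_apply, if_pos rfl]
        rw [e1, mul_one, ih]
        show (if (a : ℕ) = ((b : ℕ) + 1) + n then (1:R) else 0)
          = if (a : ℕ) = (b : ℕ) + (n + 1) then 1 else 0
        by_cases h : (a : ℕ) = (b : ℕ) + (n + 1)
        · rw [if_pos (show (a : ℕ) = ((b : ℕ) + 1) + n by omega), if_pos h]
        · rw [if_neg (show ¬ (a : ℕ) = ((b : ℕ) + 1) + n by omega), if_neg h]
      · intro c _ hne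
        rw [Jm_apply, if_neg, mul_zero]
        intro hc
        exact hne (Fin.ext (show (c : ℕ) = (b : ℕ) + 1 from hc))
      · intro hmem
        exact absurd (Finset.mem_univ _) hmem
    · rw [if_neg (by omega)]
      apply Finset.sum_eq_zero
      intro c _
      rw [Jm_apply, if_neg (by omega), mul_zero]

lemma Jm_pow_K_succ : (Jm K R) ^ (K + 1) = 0 := by
  ext a b
  rw [Jm_pow_apply, if_neg (by omega)]
  rfl

lemma geom_apply (x : R) (a b : Fin (K+1)) :
    (∑ k ∈ Finset.range (K + 1), x ^ k • (Jm K R) ^ k) a b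
      = if (b : ℕ) ≤ (a : ℕ) then x ^ ((a : ℕ) - (b : ℕ)) else 0 := by
  rw [Matrix.sum_apply]
  by_cases h : (b : ℕ) ≤ (a : ℕ)
  · rw [if_pos h, Finset.sum_eq_single ((a : ℕ) - (b : ℕ))]
    · rw [Matrix.smul_apply, Jm_pow_apply, if_pos (by omega), smul_eq_mul, mul_one]
    · intro k _ hne
      rw [Matrix.smul_apply, Jm_pow_apply, if_neg (by omega), smul_zero]
    · intro hmem
      exact absurd (Finset.mem_range.mpr (by omega)) hmem
  · rw [if_neg h]
    apply Finset.sum_eq_zero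
    intro k _
    rw [Matrix.smul_apply, Jm_pow_apply, if_neg (by omega), smul_zero]

/-- Partial-product matrix. -/
def Mm (K : ℕ) (R : Type*) [CommRing R] (x : R) (m : ℕ) : Matrix (Fin (K+1)) (Fin (K+1)) R :=
  Matrix.of fun a b => if (a : ℕ) = (b : ℕ) then 1
    else if m ≤ (b : ℕ) ∧ (b : ℕ) < (a : ℕ) then x ^ ((a : ℕ) - (b : ℕ)) else 0

lemma Mm_K (x : R) : Mm K R x K = 1 := by
  ext a b
  rw [Mm, of_apply, Matrix.one_apply]
  by_cases h : (a : ℕ) = (b : ℕ)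
  · rw [if_pos h, if_pos (Fin.ext h)]
  · rw [if_neg h, if_neg (fun hh => h (congrArg Fin.val hh)), if_neg (by omega)]

lemma Mm_zero (x : R) :
    Mm K R x 0 = ∑ k ∈ Finset.range (K + 1), x ^ k • (Jm K R) ^ k := by
  ext a b
  rw [geom_apply, Mm, of_apply]
  by_cases h : (a : ℕ) = (b : ℕ)
  · rw [if_pos h, if_pos (by omega), show (a : ℕ) - (b : ℕ) = 0 by omega, pow_zero]
  · by_cases h2 : (b : ℕ) < (a : ℕ)
    · rw [if_neg h, if_pos ⟨Nat.zero_le _, h2⟩, if_pos (by omega)]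
    · rw [if_neg h, if_neg (by omega), if_neg (by omega)]

lemma step_scalar (x : R) (a b m : ℕ) :
    (if a = b then (1:R) else if m + 1 ≤ b ∧ b < a then x ^ (a - b) else 0)
      + x * (if b = m then
          (if a = m + 1 then (1:R)
            else if m + 1 ≤ m + 1 ∧ m + 1 < a then x ^ (a - (m + 1)) else 0)
          else 0)
    = if a = b then 1 else if m ≤ b ∧ b < a then x ^ (a - b) else 0 := by
  by_cases hb : b = m
  · by_cases h1 : a = b
    · rw [if_pos h1, if_pos h1, if_pos hb, if_neg (by omega), if_neg (by omega),
        mul_zero, add_zero]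
    · rw [if_neg h1, if_neg h1, if_neg (by omega), if_pos hb, zero_add]
      by_cases h3 : a = m + 1
      · rw [if_pos h3, if_pos (by omega), mul_one, show a - b = 1 by omega, pow_one]
      · by_cases h4 : m + 1 < a
        · rw [if_neg h3, if_pos ⟨le_refl _, h4⟩, if_pos (by omega),
            show a - b = (a - (m + 1)) + 1 by omega, pow_succ']
        · rw [if_neg h3, if_neg (by omega), if_neg (by omega), mul_zero]
  · rw [if_neg hb, mul_zero, add_zero]
    by_cases h1 : a = b
    · rw [if_pos h1, if_pos h1]
    · rw [if_neg h1, if_neg h1]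
      by_cases h2 : m ≤ b ∧ b < a
      · rw [if_pos ⟨by omega, h2.2⟩, if_pos h2]
      · rw [if_neg (by omega), if_neg h2]

lemma Mm_mul_step (x : R) (m : ℕ) (hm : m < K) :
    Mm K R x (m + 1) *
      ((1 : Matrix (Fin (K+1)) (Fin (K+1)) R)
        + x • Matrix.single (⟨m, hm⟩ : Fin K).succ (⟨m, hm⟩ : Fin K).castSucc 1)
      = Mm K R x m := by
  ext a b
  rw [Matrix.mul_add, mul_one, Matrix.add_apply, Matrix.mul_smul, Matrix.smul_apply,
    Matrix.mul_apply]
  have hcol : ∀ c : Fin (K+1),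
      Mm K R x (m+1) a c * Matrix.single (⟨m, hm⟩ : Fin K).succ
        ((⟨m, hm⟩ : Fin K).castSucc) (1 : R) c b
      = if c = (⟨m+1, by omega⟩ : Fin (K+1)) then
          (if b = (⟨m, by omega⟩ : Fin (K+1)) then Mm K R x (m+1) a ⟨m+1, by omega⟩ else 0)
        else 0 := by
    intro c
    rw [Matrix.single, of_apply]
    by_cases hc : c = (⟨m+1, by omega⟩ : Fin (K+1))
    · rw [if_pos hc]
      by_cases hb : b = (⟨m, by omega⟩ : Fin (K+1))
      · rw [if_pos hb,
          if_pos ⟨Fin.ext (show m + 1 = (c : ℕ) from by rw [hc]),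
            Fin.ext (show m = (b : ℕ) from by rw [hb])⟩, mul_one, hc]
      · rw [if_neg, mul_zero, if_neg hb]
        rintro ⟨h1, h2⟩
        exact hb (Fin.ext (show (b : ℕ) = m from (congrArg Fin.val h2).symm))
    · rw [if_neg, mul_zero, if_neg hc]
      rintro ⟨h1, h2⟩
      exact hc (Fin.ext (show (c : ℕ) = m + 1 from (congrArg Fin.val h1).symm))
  rw [Finset.sum_congr rfl (fun c _ => hcol c), Finset.sum_ite_eq' Finset.univ,
    if_pos (Finset.mem_univ _)]
  have hcond : (b = (⟨m, by omega⟩ : Fin (K+1))) ↔ ((b : ℕ) = m) :=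
    ⟨fun h => by rw [h], fun h => Fin.ext h⟩
  show (if (a : ℕ) = (b : ℕ) then (1:R)
        else if m + 1 ≤ (b : ℕ) ∧ (b : ℕ) < (a : ℕ) then x ^ ((a : ℕ) - (b : ℕ)) else 0)
      + x • (if b = (⟨m, by omega⟩ : Fin (K+1)) then
          (if (a : ℕ) = m + 1 then (1:R)
            else if m + 1 ≤ m + 1 ∧ m + 1 < (a : ℕ) then x ^ ((a : ℕ) - (m + 1)) else 0)
          else 0)
    = if (a : ℕ) = (b : ℕ) then 1
        else if m ≤ (b : ℕ) ∧ (b : ℕ) < (a : ℕ) then x ^ ((a : ℕ) - (b : ℕ)) else 0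
  rw [smul_eq_mul]
  simp only [hcond]
  exact step_scalar x a b m

lemma prod_eq_Mm (x : R) :
    ∀ d m, m + d = K →
      ((((List.finRange K).drop m).map
        (fun i : Fin K => (1 : Matrix (Fin (K+1)) (Fin (K+1)) R)
          + x • Matrix.single i.succ i.castSucc 1)).reverse).prod
      = Mm K R x m := by
  intro d
  induction d with
  | zero =>
    intro m hm
    have : m = K := by omega
    subst this
    rw [List.drop_eq_nil_of_le (by simp), List.map_nil, List.reverse_nil, List.prod_nil, Mm_K]
  | succ d ih =>
    intro m hm
    have hmK : m < K := by omega
    have hdrop : (List.finRange K).drop m = (⟨m, hmK⟩ : Fin K) :: (List.finRange K).drop (m+1) := by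
      rw [List.drop_eq_getElem_cons (by simpa using hmK)]
      congr 1
      rw [List.getElem_finRange]
      rfl
    rw [hdrop, List.map_cons, List.reverse_cons, List.prod_append, List.prod_cons,
      List.prod_nil, mul_one, ih (m+1) (by omega), Mm_mul_step x m hmK]

lemma prod_eq_geom (x : R) :
    ((List.finRange K).reverse.map
        (fun i : Fin K => (1 : Matrix (Fin (K+1)) (Fin (K+1)) R)
          + x • Matrix.single i.succ i.castSucc 1)).prod
      = ∑ k ∈ Finset.range (K + 1), x ^ k • (Jm K R) ^ k := by
  rw [List.map_reverse, ← Mm_zero]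
  have := prod_eq_Mm (K := K) (R := R) x K 0 (by omega)
  simpa using this







variable [Algebra ℚ R]

noncomputable def Am (K : ℕ) (R : Type*) [CommRing R] [Algebra ℚ R] (x : R) :
    Matrix (Fin (K+1)) (Fin (K+1)) R :=
  ∑ n ∈ Finset.Icc 1 K, (((n : ℚ)⁻¹) • (x ^ n • Jm K R ^ n))

lemma aeval_Pa (x : R) : Polynomial.aeval (x • Jm K R) (Pa K) = Am K R x := by
  rw [Pa, map_sum, Am]
  apply Finset.sum_congr rfl
  intro n _
  rw [_root_.map_smul, map_pow, Polynomial.aeval_X, _root_.smul_pow]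

lemma aeval_Ga (x : R) :
    Polynomial.aeval (x • Jm K R) (Ga K)
      = ∑ k ∈ Finset.range (K + 1), x ^ k • (Jm K R) ^ k := by
  rw [Ga, map_sum]
  apply Finset.sum_congr rfl
  intro k _
  rw [map_pow, Polynomial.aeval_X, _root_.smul_pow]

lemma aeval_Ea (x : R) :
    Polynomial.aeval (x • Jm K R) (Ea K)
      = ∑ k ∈ Finset.range (K + 1), ((k.factorial : ℚ)⁻¹) • (Am K R x) ^ k := by
  rw [Ea, map_sum]
  apply Finset.sum_congr rfl
  intro k _
  rw [_root_.map_smul, map_pow, aeval_Pa]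

lemma Am_pow_eq_zero (x : R) : (Am K R x) ^ (K + 1) = 0 := by
  obtain ⟨q, hq⟩ := pow_dvd_pow_of_dvd (X_dvd_Pa K) (K + 1)
  rw [← aeval_Pa, ← map_pow, hq, _root_.map_mul, map_pow, Polynomial.aeval_X, _root_.smul_pow,
    Jm_pow_K_succ, smul_zero, zero_mul]

lemma exp_eq_geom (x : R) :
    (∑ k ∈ Finset.range (K + 1), ((k.factorial : ℚ)⁻¹) • (Am K R x) ^ k)
      = ∑ k ∈ Finset.range (K + 1), x ^ k • (Jm K R) ^ k := by
  obtain ⟨q, hq⟩ := X_pow_dvd_Ea_sub_Ga K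
  have h0 : Polynomial.aeval (x • Jm K R) (Ea K - Ga K) = 0 := by
    rw [hq, _root_.map_mul, map_pow, Polynomial.aeval_X, _root_.smul_pow, Jm_pow_K_succ, smul_zero, zero_mul]
  rw [_root_.map_sub, sub_eq_zero, aeval_Ea, aeval_Ga] at h0
  exact h0


end Eq213Aux

/-- Equation (2.13) in matrix (gl) form: in `(K+1) × (K+1)` matrices over a commutative
`ℚ`-algebra `R`, with `E i j` the matrix units and `J = ∑_{i=1}^{K} E_{i,i-1}` the
subdiagonal shift, the ordered product
`(1 + x E_{K,K-1})(1 + x E_{K-1,K-2}) ⋯ (1 + x E_{1,0})`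
equals `exp(∑_{n=1}^{K} (x^n/n) J^n)` (the exponential of this nilpotent matrix being the
finite sum `∑_{k=0}^{K} A^k / k!`, since `A^{K+1} = 0`), and both sides equal
`∑_{k=0}^{K} x^k J^k`. -/
theorem ordered_product_eq_exp_eq_geom (K : ℕ) (hK : 1 ≤ K)
    (R : Type*) [CommRing R] [Algebra ℚ R] (x : R) :
    let E : Fin (K + 1) → Fin (K + 1) → Matrix (Fin (K + 1)) (Fin (K + 1)) R :=
      fun i j => Matrix.single i j 1
    let J : Matrix (Fin (K + 1)) (Fin (K + 1)) R := ∑ i : Fin K, E i.succ i.castSucc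
    let A : Matrix (Fin (K + 1)) (Fin (K + 1)) R :=
      ∑ n ∈ Finset.Icc 1 K, (((n : ℚ)⁻¹) • (x ^ n • J ^ n))
    A ^ (K + 1) = 0 ∧
    ((List.finRange K).reverse.map
        (fun i => (1 : Matrix (Fin (K + 1)) (Fin (K + 1)) R) + x • E i.succ i.castSucc)).prod
      = ∑ k ∈ Finset.range (K + 1), ((k.factorial : ℚ)⁻¹) • A ^ k ∧
    (∑ k ∈ Finset.range (K + 1), ((k.factorial : ℚ)⁻¹) • A ^ k)
      = ∑ k ∈ Finset.range (K + 1), x ^ k • J ^ k := by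
  intro E J A
  have hJ : J = Eq213Aux.Jm K R := rfl
  have hA : A = Eq213Aux.Am K R x := by rw [Eq213Aux.Am, ← hJ]
  refine ⟨?_, ?_, ?_⟩
  · rw [hA]
    exact Eq213Aux.Am_pow_eq_zero x
  · have h2 := Eq213Aux.prod_eq_geom (K := K) (R := R) x
    have h3 := Eq213Aux.exp_eq_geom (K := K) (R := R) x
    rw [hA]
    exact h2.trans h3.symm
  · rw [hA, hJ]
    exact Eq213Aux.exp_eq_geom x
end

section
/- Constant term equals inverse determinant (Appendix A Proposition, a form of the MacMahon Master Theorem): let n ≥ 1, let F = ℚ(d_1,…,d_n) be the field of rational functions in indeterminates d_1,…,d_n, and let u_{ik} (1 ≤ i,k ≤ n, i ≠ k) be further indeterminates. Let T be the n×n matrix over the power series ring R = F[[ u_{ik} : i ≠ k ]] with diagonal entries T_{kk} = d_k and off-diagonal entries T_{ik} = u_{ik}. Define CT ∈ R by CT = ( ∏_{k=1}^{n} d_k^{-1} ) · ∑_{r} (−1)^{|r|} ∏_{k=1}^{n} [ ( ∑_{i≠k} r_{ik} )! / ∏_{i≠k} r_{ik}! ] · ∏_{i≠k} ( u_{ik}/d_k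 )^{r_{ik}}, where the sum is over all families r = (r_{ik})_{i≠k} of non-negative integers satisfying the balance condition ∑_{i≠k} r_{ik} = ∑_{j≠k} r_{kj} for every k, and |r| = ∑_{i≠k} r_{ik}. Then CT · det T = 1, i.e. CT = (det T)^{-1} in R. (CT is precisely the constant term in z_1,…,z_n of ∏_{k=1}^{n} Z_k^{-1}, where Z_k = ∑_{i=1}^{n} T_{ik} z_k/z_i and each Z_k^{-1} is expanded as the geometric series d_k^{-1} ∑_{m≥0} (−1)^m ( ∑_{i≠k} (u_{ik}/d_k) z_k z_i^{-1} )^m.) -/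
/-- Index type for the off-diagonal variables `u_{ik}`, `i ≠ k`. -/
def OffDiag (n : ℕ) : Type := {p : Fin n × Fin n // p.1 ≠ p.2}

instance (n : ℕ) : Fintype (OffDiag n) := by unfold OffDiag; infer_instance
instance (n : ℕ) : DecidableEq (OffDiag n) := by unfold OffDiag; infer_instance

/-- The field `F = ℚ(d_1, …, d_n)` of rational functions in `n` indeterminates. -/
noncomputable abbrev DField (n : ℕ) : Type :=
  FractionRing (MvPolynomial (Fin n) ℚ)

/-- The indeterminate `d_k` viewed inside `ℚ(d_1, …, d_n)`. -/
noncomputable def dgen (n : ℕ) (k : Fin n) : DField n :=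
  algebraMap (MvPolynomial (Fin n) ℚ) (DField n) (MvPolynomial.X k)

/-- The matrix `T` over `R = F[[u_{ik} : i ≠ k]]` with `T_{kk} = d_k` and
`T_{ik} = u_{ik}` for `i ≠ k`. -/
noncomputable def Tmat (n : ℕ) :
    Matrix (Fin n) (Fin n) (MvPowerSeries (OffDiag n) (DField n)) :=
  Matrix.of fun i k =>
    if h : i = k then MvPowerSeries.C (σ := OffDiag n) (R := DField n) (dgen n k)
    else MvPowerSeries.X (⟨(i, k), h⟩ : OffDiag n)

/-- For an exponent family `e = (r_{ik})_{i ≠ k}`, the `k`-th column sum `∑_{i ≠ k} r_{ik}`. -/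
def colIn (n : ℕ) (e : OffDiag n →₀ ℕ) (k : Fin n) : ℕ :=
  ∑ i : Fin n, if h : i = k then 0 else e ⟨(i, k), h⟩

/-- For an exponent family `e = (r_{ik})_{i ≠ k}`, the `k`-th row sum `∑_{j ≠ k} r_{kj}`. -/
def rowOut (n : ℕ) (e : OffDiag n →₀ ℕ) (k : Fin n) : ℕ :=
  ∑ j : Fin n, if h : k = j then 0 else e ⟨(k, j), h⟩

/-- `|r| = ∑_{i ≠ k} r_{ik}`. -/
def totDeg (n : ℕ) (e : OffDiag n →₀ ℕ) : ℕ := ∑ p : OffDiag n, e p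

/-- The multinomial coefficient `(∑_{i ≠ k} r_{ik})! / ∏_{i ≠ k} r_{ik}!`. -/
def colMultinomial (n : ℕ) (e : OffDiag n →₀ ℕ) (k : Fin n) : ℕ :=
  Nat.multinomial (Finset.univ.erase k)
    (fun i => if h : i = k then 0 else e ⟨(i, k), h⟩)

open Finset
open scoped Nat

namespace MMT

open scoped Classical

variable {n : ℕ}

/-- elementary matrix: one at (a,b). -/
def de (a b : Fin n) : Fin n → Fin n → ℕ := fun i k => if i = a ∧ k = b then 1 else 0

def inD (q : Fin n → Fin n → ℕ) (k : Fin n) : ℕ := ∑ i, q i k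
def outD (q : Fin n → Fin n → ℕ) (k : Fin n) : ℕ := ∑ j, q k j
def tot (q : Fin n → Fin n → ℕ) : ℕ := ∑ i, ∑ k, q i k

def Nn (q : Fin n → Fin n → ℕ) : ℕ := ∏ k, Nat.multinomial Finset.univ (fun i => q i k)

def Pm (σ : Equiv.Perm (Fin n)) : Fin n → Fin n → ℕ :=
  fun i k => if σ k = i ∧ σ k ≠ k then 1 else 0

def Qm (σ : Equiv.Perm (Fin n)) (x : Fin n) : Fin n → Fin n → ℕ :=
  fun i k => if k = x then 0 else Pm σ i k

noncomputable def w (σ : Equiv.Perm (Fin n)) : ℤ :=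
  (Equiv.Perm.sign σ : ℤ) * (-1) ^ σ.support.card

noncomputable def F (q : Fin n → Fin n → ℕ) (A : Finset (Fin n)) : ℤ :=
  ∑ σ : Equiv.Perm (Fin n),
    if (∀ k ∈ A, σ k = k) ∧ Pm σ ≤ q then w σ * Nn (q - Pm σ) else 0

noncomputable def GS (q : Fin n → Fin n → ℕ) (A : Finset (Fin n)) (x y : Fin n) : ℤ :=
  ∑ σ : Equiv.Perm (Fin n),
    if σ x = y ∧ (∀ k ∈ A, k ≠ x → k ≠ y → σ k = k) ∧ Qm σ x ≤ q
    then w σ * Nn (q - Qm σ x) else 0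

noncomputable def D : ℕ → (Fin n → Fin n → ℕ) → Finset (Fin n) → Fin n → Fin n → ℤ
  | 0, _, _, _, _ => 0
  | (f+1), q, A, x, y =>
    (if 1 ≤ q x y then F (q - de x y) A else 0)
    + ∑ j, if j ∉ A ∧ 1 ≤ q j y then D f (q - de j y) (insert j A) x j else 0

/-- multinomial recurrence -/
theorem multinomial_rec (s : Fin n → ℕ) (hs : 0 < ∑ i, s i) :
    Nat.multinomial Finset.univ s
      = ∑ i, if 1 ≤ s i then
          Nat.multinomial Finset.univ (fun j => s j - if j = i then 1 else 0) else 0 := by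
  have hP : 0 < ∏ j, (s j)! := Finset.prod_pos fun j _ => Nat.factorial_pos _
  refine Nat.eq_of_mul_eq_mul_left hP ?_
  rw [Finset.mul_sum]
  have key : ∀ i : Fin n, 1 ≤ s i →
      (∏ j, (s j)!) * Nat.multinomial Finset.univ (fun j => s j - if j = i then 1 else 0)
        = s i * (∑ j, s j - 1)! := by
    intro i hi
    set f : Fin n → ℕ := fun j => s j - if j = i then 1 else 0 with hf
    have hfi : f i = s i - 1 := by simp [hf]
    have hfj : ∀ j ∈ univ.erase i, f j = s j := by
      intro j hj
      simp [hf, (Finset.mem_erase.1 hj).1]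
    have h1 : (∏ j, (s j)!) = s i * ∏ j, (f j)! := by
      rw [← Finset.mul_prod_erase univ (fun j => (s j)!) (mem_univ i),
          ← Finset.mul_prod_erase univ (fun j => (f j)!) (mem_univ i)]
      have hsi : (s i)! = s i * (f i)! := by
        rw [hfi]
        cases' Nat.exists_eq_add_of_le hi with m hm
        rw [hm]
        simp [Nat.add_comm 1 m, Nat.factorial_succ, Nat.succ_sub_one]
      have eprod : ∏ x ∈ univ.erase i, (s x)! = ∏ x ∈ univ.erase i, (f x)! :=
        Finset.prod_congr rfl fun j hj => by rw [hfj j hj]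
      rw [hsi, mul_assoc, eprod]
    have h2 : (∏ j, (f j)!) * Nat.multinomial Finset.univ f = (∑ j, f j)! :=
      Nat.multinomial_spec _ _
    have h3 : (∑ j, f j) = (∑ j, s j) - 1 := by
      have e1 : f i + ∑ j ∈ univ.erase i, f j = ∑ j, f j :=
        Finset.add_sum_erase univ f (mem_univ i)
      have e2 : s i + ∑ j ∈ univ.erase i, s j = ∑ j, s j :=
        Finset.add_sum_erase univ s (mem_univ i)
      have e3 : ∑ j ∈ univ.erase i, f j = ∑ j ∈ univ.erase i, s j :=
        Finset.sum_congr rfl hfj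
      omega
    rw [h1, mul_assoc, h2, h3]
  have step : ∀ i : Fin n,
      (∏ j, (s j)!) * (if 1 ≤ s i then
          Nat.multinomial Finset.univ (fun j => s j - if j = i then 1 else 0) else 0)
        = s i * (∑ j, s j - 1)! := by
    intro i
    split
    · exact key i ‹_›
    · have : s i = 0 := by omega
      simp [this]
  rw [Finset.sum_congr rfl fun i _ => step i, ← Finset.sum_mul]
  rw [Nat.multinomial_spec]
  exact (Nat.mul_factorial_pred hs.ne').symm

lemma de_le_iff {q : Fin n → Fin n → ℕ} {a b : Fin n} : de a b ≤ q ↔ 1 ≤ q a b := by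
  constructor
  · intro h
    have := h a b
    simpa [de] using this
  · intro h i k
    by_cases hx : i = a ∧ k = b
    · rcases hx with ⟨rfl, rfl⟩
      simpa [de] using h
    · simp [de, hx]

lemma tot_sub {u q : Fin n → Fin n → ℕ} (h : u ≤ q) : tot (q - u) + tot u = tot q := by
  unfold tot
  rw [← Finset.sum_add_distrib]
  refine Finset.sum_congr rfl fun i _ => ?_
  rw [← Finset.sum_add_distrib]
  refine Finset.sum_congr rfl fun k _ => ?_
  have hik : u i k ≤ q i k := h i k
  simp only [Pi.sub_apply]
  omega

lemma tot_de (a b : Fin n) : tot (de a b) = 1 := by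
  unfold tot de
  rw [Finset.sum_eq_single a]
  · rw [Finset.sum_eq_single b] <;> simp +contextual
  · intro i _ hi
    apply Finset.sum_eq_zero
    intro k _
    simp [hi]
  · simp

lemma tot_sub_de {q : Fin n → Fin n → ℕ} {a b : Fin n} (h : 1 ≤ q a b) :
    tot (q - de a b) + 1 = tot q := by
  have := tot_sub (de_le_iff.2 h)
  rwa [tot_de] at this

lemma le_tot {q : Fin n → Fin n → ℕ} (a b : Fin n) : q a b ≤ tot q := by
  unfold tot
  calc q a b ≤ ∑ k, q a k := Finset.single_le_sum (fun k _ => Nat.zero_le _) (mem_univ b)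
  _ ≤ ∑ i, ∑ k, q i k :=
      Finset.single_le_sum (f := fun i => ∑ k, q i k) (fun i _ => Nat.zero_le _) (mem_univ a)

lemma inD_le_tot {q : Fin n → Fin n → ℕ} (b : Fin n) : inD q b ≤ tot q := by
  unfold tot inD
  rw [Finset.sum_comm]
  exact Finset.single_le_sum (f := fun k => ∑ i, q i k) (fun k _ => Nat.zero_le _) (mem_univ b)

lemma Nn_rec (q : Fin n → Fin n → ℕ) (y : Fin n) (h : 0 < inD q y) :
    Nn q = ∑ i, if 1 ≤ q i y then Nn (q - de i y) else 0 := by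
  have hcol : ∀ i : Fin n, Nn (q - de i y)
      = Nat.multinomial Finset.univ (fun j => q j y - if j = i then 1 else 0)
        * ∏ k ∈ univ.erase y, Nat.multinomial Finset.univ (fun j => q j k) := by
    intro i
    rw [Nn, ← Finset.mul_prod_erase univ _ (mem_univ y)]
    congr 1
    · congr 1
      funext j
      by_cases hj : j = i <;> simp [de, hj]
    · refine Finset.prod_congr rfl fun k hk => ?_
      congr 1
      funext j
      simp [de, (Finset.mem_erase.1 hk).1]
  rw [Nn, ← Finset.mul_prod_erase univ _ (mem_univ y),
      multinomial_rec (fun j => q j y) h, Finset.sum_mul]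
  refine Finset.sum_congr rfl fun i _ => ?_
  rw [hcol i]
  split
  · rfl
  · rw [zero_mul]

lemma D_congr : ∀ (f f' : ℕ) (q : Fin n → Fin n → ℕ) (A : Finset (Fin n)) (x y : Fin n),
    tot q < f → tot q < f' → D f q A x y = D f' q A x y := by
  intro f
  induction f with
  | zero => intro f' q A x y h _; omega
  | succ f ih =>
    intro f' q A x y h h'
    match f', h' with
    | (f''+1), h' =>
      simp only [D]
      congr 1
      refine Finset.sum_congr rfl fun j _ => ?_
      split
      · rename_i hj
        have ht : tot (q - de j y) + 1 = tot q := tot_sub_de hj.2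
        exact ih f'' _ _ _ _ (by omega) (by omega)
      · rfl

lemma de_apply (a b i k : Fin n) : de a b i k = if i = a ∧ k = b then 1 else 0 := rfl

lemma add_de_le_iff {p q : Fin n → Fin n → ℕ} {a b : Fin n} :
    p + de a b ≤ q ↔ 1 ≤ q a b ∧ p ≤ q - de a b := by
  constructor
  · intro h
    constructor
    · have h1 := h a b
      simp [de] at h1
      omega
    · intro i k
      have h1 := h i k
      by_cases hx : i = a ∧ k = b <;> simp [de, hx] at h1 ⊢ <;> omega
  · rintro ⟨h0, h⟩ i k
    have h1 := h i k
    by_cases hx : i = a ∧ k = b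
    · rcases hx with ⟨rfl, rfl⟩
      simp [de] at h1 ⊢
      omega
    · simp [de, hx] at h1 ⊢
      omega

lemma sub_add_de {q p : Fin n → Fin n → ℕ} {a b : Fin n} :
    q - (p + de a b) = (q - de a b) - p := by
  funext i k
  simp only [Pi.sub_apply, Pi.add_apply]
  omega

/-- decompose `Pm` at the column of a moved point -/
lemma Pm_eq_Qm_add {σ : Equiv.Perm (Fin n)} {x : Fin n} (hx : σ x ≠ x) :
    Pm σ = Qm σ x + de (σ x) x := by
  funext i k
  simp only [Pm, Qm, Pi.add_apply, de]
  by_cases hk : k = x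
  · subst hk
    by_cases hi : σ k = i
    · subst hi
      simp [hx]
    · have hic : i ≠ σ k := fun h => hi h.symm
      simp [hi, hic]
  · simp [hk]

lemma swap_mul_apply_left {σ : Equiv.Perm (Fin n)} (x y : Fin n) :
    (σ * Equiv.swap x y) x = σ y := by
  simp [Equiv.Perm.mul_apply]

lemma swap_mul_apply_right {σ : Equiv.Perm (Fin n)} (x y : Fin n) :
    (σ * Equiv.swap x y) y = σ x := by
  simp [Equiv.Perm.mul_apply]

lemma swap_mul_apply_other {σ : Equiv.Perm (Fin n)} {x y k : Fin n}
    (hkx : k ≠ x) (hky : k ≠ y) : (σ * Equiv.swap x y) k = σ k := by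
  simp [Equiv.Perm.mul_apply, Equiv.swap_apply_of_ne_of_ne hkx hky]

/-- support of `σ * swap x y` in "case 1": `σ x = y`, `σ y ∉ {x, y}`. -/
lemma support_case1 {σ : Equiv.Perm (Fin n)} {x y : Fin n}
    (hxy : x ≠ y) (hx : σ x = y) (hyx : σ y ≠ x) (hyy : σ y ≠ y) :
    (σ * Equiv.swap x y).support = σ.support.erase y := by
  ext k
  rw [Finset.mem_erase, Equiv.Perm.mem_support, Equiv.Perm.mem_support]
  by_cases hk : k = y
  · subst hk
    simp [swap_mul_apply_right, hx]
  · by_cases hk' : k = x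
    · subst hk'
      simp [swap_mul_apply_left, hyx, hk, hx, hxy, Ne.symm hxy]
    · rw [swap_mul_apply_other hk' hk]
      simp [hk]

lemma w_case1 {σ : Equiv.Perm (Fin n)} {x y : Fin n}
    (hxy : x ≠ y) (hx : σ x = y) (hyx : σ y ≠ x) (hyy : σ y ≠ y) :
    w (σ * Equiv.swap x y) = w σ := by
  have hsupp := support_case1 hxy hx hyx hyy
  have hy : y ∈ σ.support := Equiv.Perm.mem_support.2 hyy
  have hcard : σ.support.card = (σ * Equiv.swap x y).support.card + 1 := by
    rw [hsupp, Finset.card_erase_of_mem hy]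
    have : 0 < σ.support.card := Finset.card_pos.2 ⟨y, hy⟩
    omega
  have hsign : (Equiv.Perm.sign (σ * Equiv.swap x y) : ℤ) = -(Equiv.Perm.sign σ : ℤ) := by
    rw [map_mul, Equiv.Perm.sign_swap hxy]
    simp
  rw [w, w, hsign, hcard, pow_succ]
  ring

/-- support of `σ * swap x y` in "case 2": `σ x = y`, `σ y = x`. -/
lemma support_case2 {σ : Equiv.Perm (Fin n)} {x y : Fin n}
    (hxy : x ≠ y) (hx : σ x = y) (hyx : σ y = x) :
    (σ * Equiv.swap x y).support = (σ.support.erase x).erase y := by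
  ext k
  rw [Finset.mem_erase, Finset.mem_erase, Equiv.Perm.mem_support, Equiv.Perm.mem_support]
  by_cases hk : k = y
  · subst hk
    simp [swap_mul_apply_right, hx]
  · by_cases hk' : k = x
    · subst hk'
      simp [swap_mul_apply_left, hyx, hk]
    · rw [swap_mul_apply_other hk' hk]
      simp [hk, hk']

lemma w_case2 {σ : Equiv.Perm (Fin n)} {x y : Fin n}
    (hxy : x ≠ y) (hx : σ x = y) (hyx : σ y = x) :
    w (σ * Equiv.swap x y) = - w σ := by
  have hsupp := support_case2 hxy hx hyx
  have hxs : x ∈ σ.support := Equiv.Perm.mem_support.2 (by rw [hx]; exact Ne.symm hxy)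
  have hys : y ∈ σ.support.erase x := Finset.mem_erase.2
    ⟨hxy.symm, Equiv.Perm.mem_support.2 (by rw [hyx]; exact hxy)⟩
  have hcard : σ.support.card = (σ * Equiv.swap x y).support.card + 2 := by
    rw [hsupp, Finset.card_erase_of_mem hys, Finset.card_erase_of_mem hxs]
    have h1 : 0 < σ.support.card := Finset.card_pos.2 ⟨x, hxs⟩
    have h2 : y ∈ σ.support := Finset.mem_of_mem_erase hys
    have h3 : 1 < σ.support.card := Finset.one_lt_card.2 ⟨x, hxs, y, h2, hxy⟩
    omega
  have hsign : (Equiv.Perm.sign (σ * Equiv.swap x y) : ℤ) = -(Equiv.Perm.sign σ : ℤ) := by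
    rw [map_mul, Equiv.Perm.sign_swap hxy]
    simp
  rw [w, w, hsign, hcard, pow_add]
  ring

/-- identity (a): cut-column relation when the walk moves from `y` to a new vertex `σ y`. -/
lemma Qm_case1 {σ : Equiv.Perm (Fin n)} {x y : Fin n}
    (hxy : x ≠ y) (hx : σ x = y) (hyy : σ y ≠ y) :
    Qm σ x = Qm (σ * Equiv.swap x y) x + de (σ y) y := by
  funext i k
  simp only [Qm, Pm, Pi.add_apply, de]
  by_cases hk : k = x
  · subst hk
    simp [Ne.symm hxy, hxy]
  · by_cases hk2 : k = y
    · subst hk2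
      rw [swap_mul_apply_right]
      by_cases hi : σ k = i
      · subst hi
        simp [hk, hyy, hx]
      · have hic : i ≠ σ k := fun h => hi h.symm
        simp [hk, hi, hic, hx]
    · rw [swap_mul_apply_other hk hk2]
      simp [hk, hk2]

/-- identity (b): cut-column relation when the walk closes the 2-cycle `(x y)`. -/
lemma Qm_case2 {σ : Equiv.Perm (Fin n)} {x y : Fin n}
    (hxy : x ≠ y) (hx : σ x = y) (hyx : σ y = x) :
    Qm σ x = Pm (σ * Equiv.swap x y) + de x y := by
  funext i k
  simp only [Qm, Pm, Pi.add_apply, de]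
  by_cases hk : k = x
  · subst hk
    rw [swap_mul_apply_left]
    simp [hyx, Ne.symm hxy, hxy]
  · by_cases hk2 : k = y
    · subst hk2
      rw [swap_mul_apply_right, hx]
      by_cases hi : i = x
      · subst hi
        simp [hk, hyx, Ne.symm hk, hxy]
      · have hsk : ¬ (σ k = i) := by rw [hyx]; exact fun h => hi h.symm
        simp [hk, hi, hsk]
    · rw [swap_mul_apply_other hk hk2]
      simp [hk, hk2]

theorem GEN : ∀ (f : ℕ) (q : Fin n → Fin n → ℕ) (A : Finset (Fin n)) (x y : Fin n),
    tot q < f → x ≠ y → x ∈ A → y ∈ A → GS q A x y = - D f q A x y := by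
  intro f
  induction f with
  | zero => intro q A x y h; omega
  | succ f ih =>
    intro q A x y hq hxy hxA hyA
    have hsplit : GS q A x y = ∑ j : Fin n, ∑ σ : Equiv.Perm (Fin n),
        if σ y = j ∧ σ x = y ∧ (∀ k ∈ A, k ≠ x → k ≠ y → σ k = k) ∧ Qm σ x ≤ q
        then w σ * Nn (q - Qm σ x) else 0 := by
      rw [GS, Finset.sum_comm]
      refine Finset.sum_congr rfl fun σ _ => ?_
      rw [Finset.sum_eq_single (σ y)]
      · by_cases hc : σ x = y ∧ (∀ k ∈ A, k ≠ x → k ≠ y → σ k = k) ∧ Qm σ x ≤ q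
        · rw [if_pos hc, if_pos ⟨rfl, hc⟩]
        · rw [if_neg hc, if_neg (fun h => hc h.2)]
      · intro j _ hj
        rw [if_neg]
        rintro ⟨h1, -⟩
        exact hj (h1 ▸ rfl)
      · simp
    have hfib : ∀ j : Fin n,
        (∑ σ : Equiv.Perm (Fin n),
          if σ y = j ∧ σ x = y ∧ (∀ k ∈ A, k ≠ x → k ≠ y → σ k = k) ∧ Qm σ x ≤ q
          then w σ * Nn (q - Qm σ x) else 0)
        = (if j = x then -(if 1 ≤ q x y then F (q - de x y) A else 0) else 0)
          + (if j ∉ A ∧ 1 ≤ q j y then - D f (q - de j y) (insert j A) x j else 0) := by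
      intro j
      by_cases hjx : j = x
      · -- case: closing the 2-cycle (x y)
        subst hjx
        have hA2 : ¬ (j ∉ A ∧ 1 ≤ q j y) := fun h => h.1 hxA
        rw [if_pos rfl, if_neg hA2, add_zero]
        have step1 : (∑ σ : Equiv.Perm (Fin n),
            if σ y = j ∧ σ j = y ∧ (∀ k ∈ A, k ≠ j → k ≠ y → σ k = k) ∧ Qm σ j ≤ q
            then w σ * Nn (q - Qm σ j) else 0)
            = ∑ τ : Equiv.Perm (Fin n),
              (if 1 ≤ q j y ∧ (∀ k ∈ A, τ k = k) ∧ Pm τ ≤ q - de j y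
               then -(w τ * Nn ((q - de j y) - Pm τ)) else 0) := by
          refine Fintype.sum_equiv (Equiv.mulRight (Equiv.swap j y)) _ _ fun σ => ?_
          dsimp only [Equiv.coe_mulRight]
          by_cases hc : σ y = j ∧ σ j = y ∧ (∀ k ∈ A, k ≠ j → k ≠ y → σ k = k) ∧ Qm σ j ≤ q
          · obtain ⟨h1, h2, h3, h4⟩ := hc
            have hQ : Qm σ j = Pm (σ * Equiv.swap j y) + de j y := Qm_case2 hxy h2 h1
            have h5 := add_de_le_iff.1 (hQ ▸ h4)
            have havoid : ∀ k ∈ A, (σ * Equiv.swap j y) k = k := by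
              intro k hk
              by_cases hkj : k = j
              · subst hkj
                rw [swap_mul_apply_left, h1]
              · by_cases hky : k = y
                · subst hky
                  rw [swap_mul_apply_right, h2]
                · rw [swap_mul_apply_other hkj hky]
                  exact h3 k hk hkj hky
            rw [if_pos ⟨h1, h2, h3, h4⟩, if_pos ⟨h5.1, havoid, h5.2⟩,
              w_case2 hxy h2 h1]
            have hNn : q - Qm σ j = (q - de j y) - Pm (σ * Equiv.swap j y) := by
              rw [hQ, sub_add_de]
            rw [hNn]
            ring
          · rw [if_neg hc, if_neg]
            rintro ⟨hg, hav, hle⟩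
            apply hc
            have e1 : σ y = j := by
              have := hav j hxA
              rwa [swap_mul_apply_left] at this
            have e2 : σ j = y := by
              have := hav y hyA
              rwa [swap_mul_apply_right] at this
            refine ⟨e1, e2, fun k hk hkj hky => ?_, ?_⟩
            · have := hav k hk
              rwa [swap_mul_apply_other hkj hky] at this
            · rw [Qm_case2 hxy e2 e1]
              exact add_de_le_iff.2 ⟨hg, hle⟩
        rw [step1]
        by_cases hg : 1 ≤ q j y
        · rw [if_pos hg, F, ← Finset.sum_neg_distrib]
          refine Finset.sum_congr rfl fun τ _ => ?_
          by_cases hc : (∀ k ∈ A, τ k = k) ∧ Pm τ ≤ q - de j y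
          · rw [if_pos ⟨hg, hc.1, hc.2⟩, if_pos hc]
          · rw [if_neg (fun h => hc ⟨h.2.1, h.2.2⟩), if_neg hc, neg_zero]
        · rw [if_neg hg, neg_zero]
          exact Finset.sum_eq_zero fun τ _ => if_neg (fun h => hg h.1)
      · -- j ≠ x
        rw [if_neg hjx, zero_add]
        by_cases hjA : j ∈ A
        · rw [if_neg (fun h => h.1 hjA)]
          refine Finset.sum_eq_zero fun σ _ => if_neg ?_
          rintro ⟨h1, h2, h3, h4⟩
          by_cases hjy : j = y
          · subst hjy
            exact hxy (σ.injective (h2.trans h1.symm))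
          · have := h3 j hjA hjx hjy
            exact hjy (σ.injective (h1.trans this.symm)).symm
        · have hjy : j ≠ y := fun h => hjA (h ▸ hyA)
          by_cases hg : 1 ≤ q j y
          · rw [if_pos ⟨hjA, hg⟩]
            have htot : tot (q - de j y) < f := by
              have := tot_sub_de hg
              omega
            have hxj : x ≠ j := fun h => hjA (h ▸ hxA)
            rw [← ih (q - de j y) (insert j A) x j htot hxj
              (mem_insert_of_mem hxA) (mem_insert_self _ _), GS]
            refine Fintype.sum_equiv (Equiv.mulRight (Equiv.swap x y)) _ _ fun σ => ?_
            dsimp only [Equiv.coe_mulRight]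
            by_cases hc : σ y = j ∧ σ x = y ∧ (∀ k ∈ A, k ≠ x → k ≠ y → σ k = k) ∧ Qm σ x ≤ q
            · obtain ⟨h1, h2, h3, h4⟩ := hc
              have hyy : σ y ≠ y := by rw [h1]; exact hjy
              have hQ : Qm σ x = Qm (σ * Equiv.swap x y) x + de j y := by
                rw [Qm_case1 hxy h2 hyy, h1]
              have h5 := add_de_le_iff.1 (hQ ▸ h4)
              have e1 : (σ * Equiv.swap x y) x = j := by rw [swap_mul_apply_left, h1]
              have havoid : ∀ k ∈ insert j A, k ≠ x → k ≠ j → (σ * Equiv.swap x y) k = k := by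
                intro k hk hkx hkj
                have hkA : k ∈ A := by
                  rcases Finset.mem_insert.1 hk with h | h
                  · exact absurd h hkj
                  · exact h
                by_cases hky : k = y
                · subst hky
                  rw [swap_mul_apply_right, h2]
                · rw [swap_mul_apply_other hkx hky]
                  exact h3 k hkA hkx hky
              rw [if_pos ⟨h1, h2, h3, h4⟩, if_pos ⟨e1, havoid, h5.2⟩,
                w_case1 hxy h2 (by rw [h1]; exact Ne.symm hxj) hyy]
              have hNn : q - Qm σ x = (q - de j y) - Qm (σ * Equiv.swap x y) x := by
                rw [hQ, sub_add_de]
              rw [hNn]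
            · rw [if_neg hc, if_neg]
              rintro ⟨e1, hav, hle⟩
              apply hc
              have h1 : σ y = j := by rwa [swap_mul_apply_left] at e1
              have h2 : σ x = y := by
                have := hav y (Finset.mem_insert_of_mem hyA) (Ne.symm hxy) (Ne.symm hjy)
                rwa [swap_mul_apply_right] at this
              have hyy : σ y ≠ y := by rw [h1]; exact hjy
              refine ⟨h1, h2, fun k hk hkx hky => ?_, ?_⟩
              · have hkj : k ≠ j := fun h => hjA (h ▸ hk)
                have := hav k (Finset.mem_insert_of_mem hk) hkx hkj
                rwa [swap_mul_apply_other hkx hky] at this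
              · have hQ : Qm σ x = Qm (σ * Equiv.swap x y) x + de j y := by
                  rw [Qm_case1 hxy h2 hyy, h1]
                rw [hQ]
                exact add_de_le_iff.2 ⟨hg, hle⟩
          · rw [if_neg (fun h => hg h.2)]
            refine Finset.sum_eq_zero fun σ _ => if_neg ?_
            rintro ⟨h1, h2, h3, h4⟩
            apply hg
            have := h4 j y
            rw [Qm, if_neg (Ne.symm hxy), Pm, if_pos ⟨h1, by rw [h1]; exact hjy⟩] at this
            exact this
    rw [hsplit, Finset.sum_congr rfl (fun j _ => hfib j), Finset.sum_add_distrib,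
      Finset.sum_ite_eq' Finset.univ x]
    show _ = -((if 1 ≤ q x y then F (q - de x y) A else 0)
      + ∑ j, if j ∉ A ∧ 1 ≤ q j y then D f (q - de j y) (insert j A) x j else 0)
    rw [neg_add]
    congr 1
    · simp
    · rw [← Finset.sum_neg_distrib]
      refine Finset.sum_congr rfl fun j _ => ?_
      split
      · rfl
      · rw [neg_zero]

lemma Pm_col_zero {σ : Equiv.Perm (Fin n)} {y : Fin n} (h : σ y = y) (i : Fin n) :
    Pm σ i y = 0 := by
  unfold Pm
  rw [if_neg]
  rintro ⟨-, h2⟩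
  exact h2 h

lemma Pm_le_sub {σ : Equiv.Perm (Fin n)} {q : Fin n → Fin n → ℕ} {i y : Fin n}
    (h : Pm σ ≤ q) (hy : σ y = y) : Pm σ ≤ q - de i y := by
  intro a b
  have h1 := h a b
  by_cases hb : b = y
  · subst hb
    rw [Pm_col_zero hy a]
    exact Nat.zero_le _
  · simp only [Pi.sub_apply, de]
    have hc : ¬ (a = i ∧ b = y) := fun hc => hb hc.2
    rw [if_neg hc, Nat.sub_zero]
    exact h1

lemma sub_sub_comm (q u v : Fin n → Fin n → ℕ) : (q - u) - v = (q - v) - u := by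
  funext i k
  simp only [Pi.sub_apply]
  omega

lemma outD_sub_de {q : Fin n → Fin n → ℕ} {a b : Fin n} (h : 1 ≤ q a b) (k : Fin n) :
    outD (q - de a b) k = outD q k - (if k = a then 1 else 0) := by
  by_cases hk : k = a
  · subst hk
    rw [if_pos rfl]
    have key : ∑ j, ((q k j - de k b k j) + de k b k j) = ∑ j, q k j := by
      refine Finset.sum_congr rfl fun j _ => ?_
      by_cases hj : j = b
      · subst hj
        simp [de]
        omega
      · simp [de, hj]
    rw [Finset.sum_add_distrib] at key
    have hde : ∑ j, de k b k j = 1 := by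
      simp [de, Finset.sum_ite_eq']
    rw [hde] at key
    unfold outD
    simp only [Pi.sub_apply]
    omega
  · rw [if_neg hk]
    unfold outD
    rw [Nat.sub_zero]
    refine Finset.sum_congr rfl fun j _ => ?_
    simp [de, hk]

lemma inD_sub_de {q : Fin n → Fin n → ℕ} {a b : Fin n} (h : 1 ≤ q a b) (k : Fin n) :
    inD (q - de a b) k = inD q k - (if k = b then 1 else 0) := by
  by_cases hk : k = b
  · subst hk
    rw [if_pos rfl]
    have key : ∑ i, ((q i k - de a k i k) + de a k i k) = ∑ i, q i k := by
      refine Finset.sum_congr rfl fun i _ => ?_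
      by_cases hi : i = a
      · subst hi
        simp [de]
        omega
      · simp [de, hi]
    rw [Finset.sum_add_distrib] at key
    have hde : ∑ i, de a k i k = 1 := by
      simp [de, Finset.sum_ite_eq']
    rw [hde] at key
    unfold inD
    simp only [Pi.sub_apply]
    omega
  · rw [if_neg hk]
    unfold inD
    rw [Nat.sub_zero]
    refine Finset.sum_congr rfl fun i _ => ?_
    have hc : ¬ (i = a ∧ k = b) := fun hc => hk hc.2
    simp [de, hc]

lemma le_outD {q : Fin n → Fin n → ℕ} (a b : Fin n) : q a b ≤ outD q a :=
  Finset.single_le_sum (f := fun j => q a j) (fun j _ => Nat.zero_le _) (mem_univ b)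

lemma le_inD {q : Fin n → Fin n → ℕ} (a b : Fin n) : q a b ≤ inD q b :=
  Finset.single_le_sum (f := fun i => q i b) (fun i _ => Nat.zero_le _) (mem_univ a)

theorem ML : ∀ (f : ℕ) (q : Fin n → Fin n → ℕ) (A : Finset (Fin n)) (v y : Fin n),
    tot q < f → (∀ k, q k k = 0) → v ∈ A → y ∈ A → 1 ≤ inD q y →
    (∀ k, (outD q k : ℤ) - (inD q k : ℤ)
        = (if k = v then 1 else 0) - (if k = y then 1 else 0)) →
    F q A = ∑ x ∈ A, D f q A x y := by
  intro f
  induction f with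
  | zero => intro q A v y h; omega
  | succ f ih =>
    intro q A v y hq hdiag hvA hyA hin himb
    have key : ∀ σ : Equiv.Perm (Fin n),
        (if (∀ k ∈ A, σ k = k) ∧ Pm σ ≤ q then w σ * Nn (q - Pm σ) else 0)
        = ∑ i, (if 1 ≤ q i y ∧ (∀ k ∈ A, σ k = k) ∧ Pm σ ≤ q - de i y
            then w σ * Nn ((q - de i y) - Pm σ) else 0) := by
      intro σ
      by_cases hc : (∀ k ∈ A, σ k = k) ∧ Pm σ ≤ q
      · obtain ⟨h1, h2⟩ := hc
        have hyfix : σ y = y := h1 y hyA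
        have hcol : ∀ i, (q - Pm σ) i y = q i y := fun i => by
          simp [Pi.sub_apply, Pm_col_zero hyfix]
        have hinD : 0 < inD (q - Pm σ) y := by
          unfold inD
          rw [Finset.sum_congr rfl fun i _ => hcol i]
          exact hin
        rw [if_pos ⟨h1, h2⟩, Nn_rec (q - Pm σ) y hinD]
        push_cast [Finset.mul_sum]
        refine Finset.sum_congr rfl fun i _ => ?_
        rw [hcol i]
        by_cases hg : 1 ≤ q i y
        · rw [if_pos hg, if_pos ⟨hg, h1, Pm_le_sub h2 hyfix⟩, sub_sub_comm]
        · rw [if_neg hg, if_neg (fun hc' => hg hc'.1), mul_zero]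
      · rw [if_neg hc]
        symm
        refine Finset.sum_eq_zero fun i _ => if_neg ?_
        rintro ⟨hg, h1, h2⟩
        exact hc ⟨h1, h2.trans (fun a b => Nat.sub_le _ _)⟩
    have hEi : ∀ i : Fin n,
        (∑ σ : Equiv.Perm (Fin n),
          if 1 ≤ q i y ∧ (∀ k ∈ A, σ k = k) ∧ Pm σ ≤ q - de i y
          then w σ * Nn ((q - de i y) - Pm σ) else 0)
        = if i ∈ A then (if 1 ≤ q i y then F (q - de i y) A else 0)
          else (if 1 ≤ q i y then ∑ x ∈ A, D f (q - de i y) (insert i A) x i else 0) := by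
      intro i
      by_cases hg : 1 ≤ q i y
      case neg =>
        rw [Finset.sum_eq_zero fun σ _ => if_neg (fun h => hg h.1)]
        split <;> simp [hg]
      case pos =>
      rw [Finset.sum_congr rfl fun σ _ => if_congr (and_iff_right hg) rfl rfl]
      by_cases hiA : i ∈ A
      · rw [if_pos hiA, if_pos hg, F]
      · rw [if_neg hiA, if_pos hg]
        have hg' : tot (q - de i y) < f := by
          have := tot_sub_de hg
          omega
        have hiv : i ≠ v := fun h => hiA (h ▸ hvA)
        set q' := q - de i y with hq'def
        -- split into σ fixing i and σ moving i
        have hsplit2 : (∑ σ : Equiv.Perm (Fin n),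
            if (∀ k ∈ A, σ k = k) ∧ Pm σ ≤ q' then w σ * Nn (q' - Pm σ) else 0)
            = F q' (insert i A)
              + ∑ σ : Equiv.Perm (Fin n),
                if σ i ≠ i ∧ (∀ k ∈ A, σ k = k) ∧ Pm σ ≤ q'
                then w σ * Nn (q' - Pm σ) else 0 := by
          rw [F, ← Finset.sum_add_distrib]
          refine Finset.sum_congr rfl fun σ _ => ?_
          by_cases hfix : σ i = i
          · by_cases hc : (∀ k ∈ A, σ k = k) ∧ Pm σ ≤ q'
            · rw [if_pos hc, if_pos ⟨(Finset.forall_mem_insert _ _ _).2 ⟨hfix, hc.1⟩, hc.2⟩,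
                if_neg (fun h => h.1 hfix), add_zero]
            · rw [if_neg hc,
                if_neg (fun h => hc ⟨((Finset.forall_mem_insert _ _ _).1 h.1).2, h.2⟩),
                if_neg (fun h => hc h.2), add_zero]
          · by_cases hc : (∀ k ∈ A, σ k = k) ∧ Pm σ ≤ q'
            · rw [if_pos hc, if_neg (fun h => hfix (h.1 i (Finset.mem_insert_self i A))),
                if_pos ⟨hfix, hc⟩, zero_add]
            · rw [if_neg hc,
                if_neg (fun h => hc ⟨((Finset.forall_mem_insert _ _ _).1 h.1).2, h.2⟩),
                if_neg (fun h => hc h.2), add_zero]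
        -- second piece: group by j = σ i
        have ht2 : (∑ σ : Equiv.Perm (Fin n),
            if σ i ≠ i ∧ (∀ k ∈ A, σ k = k) ∧ Pm σ ≤ q'
            then w σ * Nn (q' - Pm σ) else 0)
            = ∑ j, (if j ∉ insert i A ∧ 1 ≤ q' j i
                then GS (q' - de j i) (insert j (insert i A)) i j else 0) := by
          have hs : (∑ σ : Equiv.Perm (Fin n),
              if σ i ≠ i ∧ (∀ k ∈ A, σ k = k) ∧ Pm σ ≤ q'
              then w σ * Nn (q' - Pm σ) else 0)
              = ∑ j, ∑ σ : Equiv.Perm (Fin n),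
                if σ i = j ∧ σ i ≠ i ∧ (∀ k ∈ A, σ k = k) ∧ Pm σ ≤ q'
                then w σ * Nn (q' - Pm σ) else 0 := by
            rw [Finset.sum_comm]
            refine Finset.sum_congr rfl fun σ _ => ?_
            rw [Finset.sum_eq_single (σ i)]
            · by_cases hc : σ i ≠ i ∧ (∀ k ∈ A, σ k = k) ∧ Pm σ ≤ q'
              · rw [if_pos hc, if_pos ⟨rfl, hc⟩]
              · rw [if_neg hc, if_neg (fun h => hc h.2)]
            · intro j _ hj
              refine if_neg ?_
              rintro ⟨h1, -⟩
              exact hj h1.symm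
            · simp
          rw [hs]
          refine Finset.sum_congr rfl fun j _ => ?_
          by_cases hjI : j ∈ insert i A
          · rw [if_neg (fun h => h.1 hjI)]
            refine Finset.sum_eq_zero fun σ _ => if_neg ?_
            rintro ⟨h1, h2, h3, h4⟩
            rcases Finset.mem_insert.1 hjI with hj | hj
            · exact h2 (hj ▸ h1)
            · exact h2 (h1.trans (σ.injective (h1.trans (h3 j hj).symm)).symm)
          · by_cases hgj : 1 ≤ q' j i
            · rw [if_pos ⟨hjI, hgj⟩, GS]
              have hji : j ≠ i := fun h => hjI (h ▸ Finset.mem_insert_self i A)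
              refine Finset.sum_congr rfl fun σ _ => ?_
              by_cases hc : σ i = j ∧ σ i ≠ i ∧ (∀ k ∈ A, σ k = k) ∧ Pm σ ≤ q'
              · obtain ⟨h1, h2, h3, h4⟩ := hc
                have hPQ : Pm σ = Qm σ i + de j i := by
                  rw [Pm_eq_Qm_add h2, h1]
                have h5 := add_de_le_iff.1 (hPQ ▸ h4)
                have havoid : ∀ k ∈ insert j (insert i A), k ≠ i → k ≠ j → σ k = k := by
                  intro k hk hki hkj
                  rcases Finset.mem_insert.1 hk with h | h
                  · exact absurd h hkj
                  · rcases Finset.mem_insert.1 h with h' | h'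
                    · exact absurd h' hki
                    · exact h3 k h'
                rw [if_pos ⟨h1, h2, h3, h4⟩, if_pos ⟨h1, havoid, h5.2⟩]
                congr 1
                rw [hPQ, sub_add_de]
              · rw [if_neg hc, if_neg]
                rintro ⟨h1, hav, hle⟩
                apply hc
                have h2 : σ i ≠ i := fun h => hji (h1.symm.trans h)
                have hPQ : Pm σ = Qm σ i + de j i := by
                  rw [Pm_eq_Qm_add h2, h1]
                refine ⟨h1, h2, ?_, ?_⟩
                · intro k hk
                  have hki : k ≠ i := fun h => hiA (h ▸ hk)
                  have hkj : k ≠ j := fun h => hjI (Finset.mem_insert_of_mem (h ▸ hk))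
                  exact hav k (Finset.mem_insert_of_mem (Finset.mem_insert_of_mem hk)) hki hkj
                · rw [hPQ]
                  exact add_de_le_iff.2 ⟨hgj, hle⟩
            · rw [if_neg (fun h => hgj h.2)]
              refine Finset.sum_eq_zero fun σ _ => if_neg ?_
              rintro ⟨h1, h2, h3, h4⟩
              apply hgj
              have := h4 j i
              rwa [Pm, if_pos ⟨h1, h2⟩] at this
        -- diag zero for q'
        have hdiag' : ∀ k, q' k k = 0 := fun k => by
          have := hdiag k
          simp only [hq'def, Pi.sub_apply]
          omega
        -- imbalance for q'
        have himb' : ∀ k, (outD q' k : ℤ) - (inD q' k : ℤ)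
            = (if k = v then 1 else 0) - (if k = i then 1 else 0) := by
          intro k
          have ho : (outD q' k : ℤ) = (outD q k : ℤ) - (if k = i then 1 else 0) := by
            rw [hq'def, outD_sub_de hg k]
            by_cases hk : k = i
            · subst hk
              rw [if_pos rfl, if_pos rfl, Nat.cast_sub (hg.trans (le_outD k y))]
              push_cast
              ring
            · rw [if_neg hk, if_neg hk, Nat.sub_zero]
              push_cast
              ring
          have hi : (inD q' k : ℤ) = (inD q k : ℤ) - (if k = y then 1 else 0) := by
            rw [hq'def, inD_sub_de hg k]
            by_cases hk : k = y
            · subst hk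
              rw [if_pos rfl, if_pos rfl, Nat.cast_sub (hg.trans (le_inD i k))]
              push_cast
              ring
            · rw [if_neg hk, if_neg hk, Nat.sub_zero]
              push_cast
              ring
          have := himb k
          rw [ho, hi]
          split_ifs at this ⊢ <;> omega
        -- in-degree at i is positive
        have hin' : 1 ≤ inD q' i := by
          have := himb' i
          rw [if_neg hiv, if_pos rfl] at this
          omega
        -- apply induction hypothesis
        have hIH := ih q' (insert i A) v i hg' hdiag' (Finset.mem_insert_of_mem hvA)
          (Finset.mem_insert_self i A) hin' himb'
        rw [hsplit2, ht2, hIH, Finset.sum_insert hiA]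
        -- cancel the D _ _ i i term
        obtain ⟨f', rfl⟩ : ∃ f', f = f' + 1 := ⟨f - 1, by omega⟩
        have hDii : D (f' + 1) q' (insert i A) i i
            = ∑ j, (if j ∉ insert i A ∧ 1 ≤ q' j i
                then D f' (q' - de j i) (insert j (insert i A)) i j else 0) := by
          show (if 1 ≤ q' i i then _ else 0) + _ = _
          rw [if_neg (by rw [hdiag' i]; omega), zero_add]
        have hGS : ∀ j, (if j ∉ insert i A ∧ 1 ≤ q' j i
              then GS (q' - de j i) (insert j (insert i A)) i j else 0)
            = - (if j ∉ insert i A ∧ 1 ≤ q' j i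
              then D f' (q' - de j i) (insert j (insert i A)) i j else 0) := by
          intro j
          by_cases hcj : j ∉ insert i A ∧ 1 ≤ q' j i
          · rw [if_pos hcj, if_pos hcj]
            have hji : i ≠ j := fun h => hcj.1 (h ▸ Finset.mem_insert_self i A)
            have htj : tot (q' - de j i) < f' := by
              have h1 := tot_sub_de hcj.2
              omega
            exact GEN f' (q' - de j i) (insert j (insert i A)) i j htj hji
              (Finset.mem_insert_of_mem (Finset.mem_insert_self i A))
              (Finset.mem_insert_self j _)
          · rw [if_neg hcj, if_neg hcj, neg_zero]
        rw [Finset.sum_congr rfl fun j _ => hGS j, Finset.sum_neg_distrib, ← hDii]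
        ring
    -- assemble
    rw [F, Finset.sum_congr rfl fun σ _ => key σ, Finset.sum_comm,
      Finset.sum_congr rfl fun i _ => hEi i]
    have hRHS : ∀ x, D (f + 1) q A x y
        = (if 1 ≤ q x y then F (q - de x y) A else 0)
          + ∑ j, (if j ∉ A ∧ 1 ≤ q j y then D f (q - de j y) (insert j A) x j else 0) := by
      intro x
      rfl
    rw [Finset.sum_congr rfl fun x _ => hRHS x, Finset.sum_add_distrib, Finset.sum_comm]
    have hL : ∀ i : Fin n,
        (if i ∈ A then (if 1 ≤ q i y then F (q - de i y) A else 0)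
          else (if 1 ≤ q i y then ∑ x ∈ A, D f (q - de i y) (insert i A) x i else 0))
        = (if i ∈ A then (if 1 ≤ q i y then F (q - de i y) A else 0) else 0)
          + (∑ x ∈ A, if i ∉ A ∧ 1 ≤ q i y then D f (q - de i y) (insert i A) x i else 0) := by
      intro i
      by_cases hiA : i ∈ A
      · rw [if_pos hiA, if_pos hiA,
          Finset.sum_eq_zero fun x _ => if_neg (fun h => h.1 hiA), add_zero]
      · rw [if_neg hiA, if_neg hiA, zero_add]
        by_cases hg : 1 ≤ q i y
        · rw [if_pos hg]
          exact Finset.sum_congr rfl fun x _ => (if_pos ⟨hiA, hg⟩).symm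
        · rw [if_neg hg]
          exact (Finset.sum_eq_zero fun x _ => if_neg (fun h => hg h.2)).symm
    rw [Finset.sum_congr rfl fun i _ => hL i, Finset.sum_add_distrib]
    congr 1
    rw [Finset.sum_ite_mem, Finset.univ_inter]

theorem TOP {q : Fin n → Fin n → ℕ} (hdiag : ∀ k, q k k = 0)
    (hbal : ∀ k, outD q k = inD q k) (hne : 0 < tot q) :
    (∑ σ : Equiv.Perm (Fin n), if Pm σ ≤ q then w σ * Nn (q - Pm σ) else 0) = 0 := by
  have hex : ∃ y, 1 ≤ inD q y := by
    by_contra h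
    push_neg at h
    have htot : tot q = 0 := by
      unfold tot
      rw [Finset.sum_comm]
      refine Finset.sum_eq_zero fun k _ => ?_
      have := h k
      unfold inD at this
      omega
    omega
  obtain ⟨y, hin⟩ := hex
  have himb : ∀ k, (outD q k : ℤ) - (inD q k : ℤ)
      = (if k = y then 1 else 0) - (if k = y then 1 else 0) := fun k => by
    rw [hbal k]
    ring
  have hML := ML (tot q + 1) q {y} y y (by omega) hdiag (Finset.mem_singleton_self y)
    (Finset.mem_singleton_self y) hin himb
  rw [Finset.sum_singleton] at hML
  have hsplit : (∑ σ : Equiv.Perm (Fin n), if Pm σ ≤ q then w σ * Nn (q - Pm σ) else 0)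
      = F q {y} + ∑ σ : Equiv.Perm (Fin n),
          (if σ y ≠ y ∧ Pm σ ≤ q then w σ * Nn (q - Pm σ) else 0) := by
    rw [F, ← Finset.sum_add_distrib]
    refine Finset.sum_congr rfl fun σ _ => ?_
    by_cases hfix : σ y = y
    · by_cases hc : Pm σ ≤ q
      · rw [if_pos hc, if_pos ⟨fun k hk => (Finset.mem_singleton.1 hk) ▸ hfix, hc⟩,
          if_neg (fun h => h.1 hfix), add_zero]
      · rw [if_neg hc, if_neg (fun h => hc h.2), if_neg (fun h => hc h.2), add_zero]
    · by_cases hc : Pm σ ≤ q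
      · rw [if_pos hc, if_neg (fun h => hfix (h.1 y (Finset.mem_singleton_self y))),
          if_pos ⟨hfix, hc⟩, zero_add]
      · rw [if_neg hc, if_neg (fun h => hc h.2), if_neg (fun h => hc h.2), add_zero]
  have h2 : (∑ σ : Equiv.Perm (Fin n),
        if σ y ≠ y ∧ Pm σ ≤ q then w σ * Nn (q - Pm σ) else 0)
      = - D (tot q + 1) q {y} y y := by
    have hs : (∑ σ : Equiv.Perm (Fin n),
        if σ y ≠ y ∧ Pm σ ≤ q then w σ * Nn (q - Pm σ) else 0)
        = ∑ j, ∑ σ : Equiv.Perm (Fin n),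
          if σ y = j ∧ σ y ≠ y ∧ Pm σ ≤ q then w σ * Nn (q - Pm σ) else 0 := by
      rw [Finset.sum_comm]
      refine Finset.sum_congr rfl fun σ _ => ?_
      rw [Finset.sum_eq_single (σ y)]
      · by_cases hc : σ y ≠ y ∧ Pm σ ≤ q
        · rw [if_pos hc, if_pos ⟨rfl, hc⟩]
        · rw [if_neg hc, if_neg (fun h => hc h.2)]
      · intro j _ hj
        refine if_neg ?_
        rintro ⟨h1, -⟩
        exact hj h1.symm
      · simp
    have hfib : ∀ j, (∑ σ : Equiv.Perm (Fin n),
          if σ y = j ∧ σ y ≠ y ∧ Pm σ ≤ q then w σ * Nn (q - Pm σ) else 0)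
        = (if j ∉ ({y} : Finset (Fin n)) ∧ 1 ≤ q j y
            then GS (q - de j y) (insert j {y}) y j else 0) := by
      intro j
      by_cases hjy : j = y
      · subst hjy
        rw [if_neg (fun h => h.1 (Finset.mem_singleton_self j))]
        refine Finset.sum_eq_zero fun σ _ => if_neg ?_
        rintro ⟨h1, h2, -⟩
        exact h2 h1
      · by_cases hg : 1 ≤ q j y
        · rw [if_pos ⟨fun h => hjy (Finset.mem_singleton.1 h), hg⟩, GS]
          refine Finset.sum_congr rfl fun σ _ => ?_
          by_cases hc : σ y = j ∧ σ y ≠ y ∧ Pm σ ≤ q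
          · obtain ⟨h1, hy2, h3⟩ := hc
            have hPQ : Pm σ = Qm σ y + de j y := by
              rw [Pm_eq_Qm_add hy2, h1]
            have h5 := add_de_le_iff.1 (hPQ ▸ h3)
            have havoid : ∀ k ∈ insert j ({y} : Finset (Fin n)), k ≠ y → k ≠ j → σ k = k := by
              intro k hk hky hkj
              rcases Finset.mem_insert.1 hk with h | h
              · exact absurd h hkj
              · exact absurd (Finset.mem_singleton.1 h) hky
            rw [if_pos ⟨h1, hy2, h3⟩, if_pos ⟨h1, havoid, h5.2⟩]
            congr 1
            rw [hPQ, sub_add_de]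
          · rw [if_neg hc, if_neg]
            rintro ⟨h1, hav, hle⟩
            apply hc
            have hy2 : σ y ≠ y := fun h => hjy (h1.symm.trans h)
            have hPQ : Pm σ = Qm σ y + de j y := by
              rw [Pm_eq_Qm_add hy2, h1]
            exact ⟨h1, hy2, hPQ ▸ add_de_le_iff.2 ⟨hg, hle⟩⟩
        · rw [if_neg (fun h => hg h.2)]
          refine Finset.sum_eq_zero fun σ _ => if_neg ?_
          rintro ⟨h1, h2, h3⟩
          apply hg
          have := h3 j y
          rwa [Pm, if_pos ⟨h1, h2⟩] at this
    have hDy : D (tot q + 1) q {y} y y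
        = ∑ j, (if j ∉ ({y} : Finset (Fin n)) ∧ 1 ≤ q j y
            then D (tot q) (q - de j y) (insert j {y}) y j else 0) := by
      show (if 1 ≤ q y y then _ else 0) + _ = _
      rw [if_neg (by rw [hdiag y]; omega), zero_add]
    rw [hs, Finset.sum_congr rfl fun j _ => hfib j, hDy, ← Finset.sum_neg_distrib]
    refine Finset.sum_congr rfl fun j _ => ?_
    by_cases hcj : j ∉ ({y} : Finset (Fin n)) ∧ 1 ≤ q j y
    · rw [if_pos hcj, if_pos hcj]
      have hyj : y ≠ j := fun h => hcj.1 (h ▸ Finset.mem_singleton_self y)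
      have htj : tot (q - de j y) < tot q := by
        have := tot_sub_de hcj.2
        omega
      exact GEN (tot q) (q - de j y) (insert j {y}) y j htj hyj
        (Finset.mem_insert_of_mem (Finset.mem_singleton_self y))
        (Finset.mem_insert_self j _)
    · rw [if_neg hcj, if_neg hcj, neg_zero]
  rw [hsplit, hML, h2]
  ring

/-! ### Boundary between finsupp exponents and matrix exponents -/

def qOf (e : OffDiag n →₀ ℕ) : Fin n → Fin n → ℕ :=
  fun i k => if h : i = k then 0 else e ⟨(i, k), h⟩

lemma qOf_diag (e : OffDiag n →₀ ℕ) (k : Fin n) : qOf e k k = 0 := by simp [qOf]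

lemma inD_qOf (e : OffDiag n →₀ ℕ) (k : Fin n) : inD (qOf e) k = colIn n e k := rfl

lemma outD_qOf (e : OffDiag n →₀ ℕ) (k : Fin n) : outD (qOf e) k = rowOut n e k := rfl

lemma qOf_point (e : OffDiag n →₀ ℕ) (p : OffDiag n) : qOf e p.1.1 p.1.2 = e p := by
  obtain ⟨⟨i, k⟩, hik⟩ := p
  simp only [qOf]
  rw [dif_neg hik]

lemma tot_qOf (e : OffDiag n →₀ ℕ) : tot (qOf e) = totDeg n e := by
  unfold tot totDeg
  rw [← Fintype.sum_prod_type']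
  rw [← Finset.sum_filter_add_sum_filter_not Finset.univ
    (fun p : Fin n × Fin n => p.1 ≠ p.2) (fun p => qOf e p.1 p.2)]
  have h2 : ∑ p ∈ Finset.univ.filter (fun p : Fin n × Fin n => ¬ p.1 ≠ p.2),
      qOf e p.1 p.2 = 0 := by
    refine Finset.sum_eq_zero fun p hp => ?_
    have := (Finset.mem_filter.1 hp).2
    push_neg at this
    simp [qOf, this]
  rw [h2, add_zero, Finset.sum_subtype (p := fun p : Fin n × Fin n => p.1 ≠ p.2)
    (Finset.univ.filter fun p : Fin n × Fin n => p.1 ≠ p.2)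
    (by simp) (fun p => qOf e p.1 p.2)]
  show ∑ p : OffDiag n, qOf e p.1.1 p.1.2 = _
  exact Finset.sum_congr rfl fun p _ => qOf_point e p

lemma Nn_qOf (e : OffDiag n →₀ ℕ) : Nn (qOf e) = ∏ k, colMultinomial n e k := by
  unfold Nn colMultinomial
  refine Finset.prod_congr rfl fun k _ => ?_
  have : (Finset.univ : Finset (Fin n)) = insert k (Finset.univ.erase k) :=
    (Finset.insert_erase (Finset.mem_univ k)).symm
  rw [this, Nat.multinomial_insert (Finset.notMem_erase k Finset.univ)]
  simp [qOf]

noncomputable def Pf (σ : Equiv.Perm (Fin n)) : OffDiag n →₀ ℕ :=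
  Finsupp.equivFunOnFinite.symm (fun p => Pm σ p.1.1 p.1.2)

lemma Pf_apply (σ : Equiv.Perm (Fin n)) (p : OffDiag n) : Pf σ p = Pm σ p.1.1 p.1.2 := by
  simp [Pf]

lemma Pm_diag (σ : Equiv.Perm (Fin n)) (k : Fin n) : Pm σ k k = 0 := by
  simp only [Pm]
  rw [if_neg]
  rintro ⟨h1, h2⟩
  exact h2 h1

lemma qOf_sub (e : OffDiag n →₀ ℕ) (σ : Equiv.Perm (Fin n)) :
    qOf (e - Pf σ) = qOf e - Pm σ := by
  funext i k
  by_cases h : i = k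
  · subst h
    simp [qOf, Pm_diag]
  · simp only [qOf, dif_neg h, Pi.sub_apply, Finsupp.tsub_apply, Pf_apply]
    exact Finsupp.tsub_apply _ _ _

lemma Pf_le_iff {σ : Equiv.Perm (Fin n)} {e : OffDiag n →₀ ℕ} :
    Pf σ ≤ e ↔ Pm σ ≤ qOf e := by
  rw [Finsupp.le_def]
  constructor
  · intro h i k
    by_cases hik : i = k
    · subst hik
      rw [Pm_diag]
      exact Nat.zero_le _
    · have := h ⟨(i, k), hik⟩
      change Pm σ i k ≤ _ at this
      simpa [qOf, hik] using this
  · intro h p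
    obtain ⟨⟨i, k⟩, hik⟩ := p
    change Pm σ i k ≤ _
    have := h i k
    simpa [qOf, hik] using this

lemma inD_sub {u q : Fin n → Fin n → ℕ} (h : u ≤ q) (k : Fin n) :
    inD (q - u) k + inD u k = inD q k := by
  unfold inD
  rw [← Finset.sum_add_distrib]
  refine Finset.sum_congr rfl fun i _ => ?_
  have hik : u i k ≤ q i k := h i k
  simp only [Pi.sub_apply]
  omega

lemma outD_sub {u q : Fin n → Fin n → ℕ} (h : u ≤ q) (k : Fin n) :
    outD (q - u) k + outD u k = outD q k := by
  unfold outD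
  rw [← Finset.sum_add_distrib]
  refine Finset.sum_congr rfl fun j _ => ?_
  have hkj : u k j ≤ q k j := h k j
  simp only [Pi.sub_apply]
  omega

lemma inD_Pm (σ : Equiv.Perm (Fin n)) (k : Fin n) :
    inD (Pm σ) k = if σ k = k then 0 else 1 := by
  unfold inD Pm
  by_cases h : σ k = k
  · rw [if_pos h]
    refine Finset.sum_eq_zero fun i _ => if_neg ?_
    rintro ⟨-, h2⟩
    exact h2 h
  · rw [if_neg h, Finset.sum_eq_single (σ k)]
    · rw [if_pos ⟨rfl, h⟩]
    · intro i _ hi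
      exact if_neg (fun hc => hi hc.1.symm)
    · simp

lemma outD_Pm (σ : Equiv.Perm (Fin n)) (k : Fin n) :
    outD (Pm σ) k = if σ k = k then 0 else 1 := by
  unfold outD Pm
  by_cases h : σ k = k
  · rw [if_pos h]
    refine Finset.sum_eq_zero fun j _ => if_neg ?_
    rintro ⟨h1, h2⟩
    have : j = k := σ.injective (h1.trans h.symm)
    exact h2 (this ▸ h1.trans this.symm)
  · rw [if_neg h, Finset.sum_eq_single (σ⁻¹ k)]
    · have h1 : σ (σ⁻¹ k) = k := σ.apply_symm_apply k
      have h2 : σ (σ⁻¹ k) ≠ σ⁻¹ k := by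
        intro hc
        rw [h1] at hc
        apply h
        calc σ k = σ (σ⁻¹ k) := by rw [← hc]
        _ = k := h1
      rw [if_pos ⟨h1, h2⟩]
    · intro j _ hj
      refine if_neg ?_
      rintro ⟨h1, -⟩
      exact hj ((σ.symm_apply_apply j).symm.trans (congrArg _ h1))
    · simp

lemma tot_Pm (σ : Equiv.Perm (Fin n)) : tot (Pm σ) = σ.support.card := by
  unfold tot
  rw [Finset.sum_comm]
  have : ∀ k, (∑ i, Pm σ i k) = if σ k ≠ k then 1 else 0 := by
    intro k
    have := inD_Pm σ k
    unfold inD at this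
    rw [this]
    by_cases h : σ k = k <;> simp [h]
  rw [Finset.sum_congr rfl fun k _ => this k, Equiv.Perm.support, ← Finset.card_filter]

/-! ### determinant of `Tmat` -/

lemma prod_monomial {ι : Type} (s : Finset ι) (m : ι → (OffDiag n →₀ ℕ)) (a : ι → DField n) :
    ∏ i ∈ s, (MvPowerSeries.monomial (R := DField n) (m i)) (a i)
      = (MvPowerSeries.monomial (R := DField n) (∑ i ∈ s, m i)) (∏ i ∈ s, a i) := by
  classical
  induction s using Finset.induction with
  | empty => simp [MvPowerSeries.monomial_zero_one]
  | insert _ _ hnotmem ih =>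
    rw [Finset.prod_insert hnotmem, Finset.sum_insert hnotmem, Finset.prod_insert hnotmem,
      ih, MvPowerSeries.monomial_mul_monomial]

noncomputable def mPf (σ : Equiv.Perm (Fin n)) (k : Fin n) : OffDiag n →₀ ℕ :=
  if h : σ k = k then 0 else Finsupp.single ⟨(σ k, k), h⟩ 1

lemma Tmat_entry (σ : Equiv.Perm (Fin n)) (k : Fin n) :
    Tmat n (σ k) k = (MvPowerSeries.monomial (R := DField n) (mPf σ k))
      (if σ k = k then dgen n k else 1) := by
  unfold Tmat mPf
  by_cases h : σ k = k
  · rw [Matrix.of_apply, dif_pos h, if_pos h, dif_pos h]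
    rfl
  · rw [Matrix.of_apply, dif_neg h, if_neg h, dif_neg h]
    exact MvPowerSeries.X_def _

lemma sum_mPf (σ : Equiv.Perm (Fin n)) : (∑ k, mPf σ k) = Pf σ := by
  ext p
  obtain ⟨⟨i, k0⟩, hik⟩ := p
  erw [Finset.sum_apply']
  rw [Finset.sum_eq_single k0]
  · erw [Pf_apply]
    simp only [mPf]
    by_cases h : σ k0 = k0
    · rw [dif_pos h]
      simp only [Pm]
      rw [if_neg (fun hc => hc.2 h)]
      rfl
    · erw [dif_neg h, Finsupp.single_apply]
      simp only [Pm]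
      by_cases hi : σ k0 = i
      · rw [if_pos (by erw [Subtype.mk.injEq, Prod.mk.injEq]; exact ⟨hi, rfl⟩),
          if_pos ⟨hi, h⟩]
      · rw [if_neg (by erw [Subtype.mk.injEq, Prod.mk.injEq]; exact fun hc => hi hc.1),
          if_neg (fun hc => hi hc.1)]
  · intro b _ hb
    simp only [mPf]
    by_cases h : σ b = b
    · rw [dif_pos h]
      rfl
    · erw [dif_neg h, Finsupp.single_apply, if_neg]
      erw [Subtype.mk.injEq, Prod.mk.injEq]
      exact fun hc => hb hc.2
  · simp

lemma det_Tmat : (Tmat n).det = ∑ σ : Equiv.Perm (Fin n),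
    (Equiv.Perm.sign σ : ℤ) • (MvPowerSeries.monomial (R := DField n) (Pf σ))
      (∏ k, if σ k = k then dgen n k else 1) := by
  rw [Matrix.det_apply]
  refine Finset.sum_congr rfl fun σ _ => ?_
  rw [Finset.prod_congr rfl (fun k _ => Tmat_entry σ k), prod_monomial, sum_mPf]
  rfl

lemma colIn_sub {e : OffDiag n →₀ ℕ} {σ : Equiv.Perm (Fin n)} (hle : Pf σ ≤ e) (k : Fin n) :
    colIn n (e - Pf σ) k + (if σ k = k then 0 else 1) = colIn n e k := by
  have h1 := inD_sub (Pf_le_iff.1 hle) k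
  rw [inD_Pm] at h1
  rw [← inD_qOf, qOf_sub, ← inD_qOf (e := e)]
  exact h1

lemma rowOut_sub {e : OffDiag n →₀ ℕ} {σ : Equiv.Perm (Fin n)} (hle : Pf σ ≤ e) (k : Fin n) :
    rowOut n (e - Pf σ) k + (if σ k = k then 0 else 1) = rowOut n e k := by
  have h1 := outD_sub (Pf_le_iff.1 hle) k
  rw [outD_Pm] at h1
  rw [← outD_qOf, qOf_sub, ← outD_qOf (e := e)]
  exact h1

lemma totDeg_sub {e : OffDiag n →₀ ℕ} {σ : Equiv.Perm (Fin n)} (hle : Pf σ ≤ e) :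
    totDeg n (e - Pf σ) + σ.support.card = totDeg n e := by
  have h1 := tot_sub (Pf_le_iff.1 hle)
  rw [tot_Pm] at h1
  rw [← tot_qOf, qOf_sub, ← tot_qOf (e := e)]
  exact h1

lemma neg_one_pow_sub {a b : ℕ} (h : b ≤ a) :
    ((-1 : DField n)) ^ (a - b) = (-1) ^ a * (-1) ^ b := by
  have h1 : ((-1 : DField n)) ^ (a - b) * (-1) ^ b = (-1) ^ a := by
    rw [← pow_add, Nat.sub_add_cancel h]
  have h2 : ((-1 : DField n)) ^ b * (-1) ^ b = 1 := by
    rw [← mul_pow]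
    norm_num
  calc ((-1 : DField n)) ^ (a - b)
      = (-1) ^ (a - b) * ((-1) ^ b * (-1) ^ b) := by rw [h2, mul_one]
  _ = ((-1) ^ (a - b) * (-1) ^ b) * (-1) ^ b := by ring
  _ = (-1) ^ a * (-1) ^ b := by rw [h1]

lemma Nn_of_zero : Nn (qOf (0 : OffDiag n →₀ ℕ) - Pm 1) = 1 := by
  have harg : (qOf (0 : OffDiag n →₀ ℕ) - Pm 1) = fun _ _ => (0 : ℕ) := by
    funext i k
    simp only [Pi.sub_apply, qOf, Pm, Equiv.Perm.one_apply]
    split <;> simp <;> rfl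
  rw [harg]
  unfold Nn
  refine Finset.prod_eq_one fun k _ => ?_
  have := Nat.multinomial_spec (Finset.univ : Finset (Fin n)) (fun _ => (0 : ℕ))
  simpa using this

end MMT

open scoped Classical in
/-- Appendix A Proposition (a form of the MacMahon Master Theorem): the series `CT`,
whose coefficient at the monomial `∏ u_{ik}^{r_{ik}}` is
`(-1)^{|r|} ∏_k [(∑_{i≠k} r_{ik})! / ∏_{i≠k} r_{ik}!] ∏_k d_k^{-(∑_{i≠k} r_{ik}) - 1}`
when `r` satisfies the balance condition `∑_{i≠k} r_{ik} = ∑_{j≠k} r_{kj}` for all `k`,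
and `0` otherwise, is the inverse of `det T` in `F[[u_{ik} : i ≠ k]]`. -/
theorem constant_term_eq_inv_det (n : ℕ) (hn : 1 ≤ n)
    (CT : MvPowerSeries (OffDiag n) (DField n))
    (hCT : ∀ e : OffDiag n →₀ ℕ,
      MvPowerSeries.coeff (R := DField n) e CT =
        if ∀ k : Fin n, colIn n e k = rowOut n e k then
          (-1 : DField n) ^ totDeg n e *
            ((∏ k : Fin n, colMultinomial n e k : ℕ) : DField n) *
            ∏ k : Fin n, dgen n k ^ (-(colIn n e k : ℤ) - 1)
        else 0) :
    CT * (Tmat n).det = 1 := by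
  classical
  have hd0 : ∀ k, dgen n k ≠ 0 := by
    intro k h
    have h2 := (map_eq_zero_iff (algebraMap (MvPolynomial (Fin n) ℚ) (DField n))
      (IsFractionRing.injective (MvPolynomial (Fin n) ℚ) (DField n))).1 h
    exact absurd h2 (MvPolynomial.X_ne_zero _)
  apply MvPowerSeries.ext
  intro e
  rw [MMT.det_Tmat, Finset.mul_sum, map_sum]
  have hterm : ∀ σ : Equiv.Perm (Fin n),
      (MvPowerSeries.coeff (R := DField n) e)
        (CT * (Equiv.Perm.sign σ : ℤ) •
          (MvPowerSeries.monomial (R := DField n) (MMT.Pf σ))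
            (∏ k, if σ k = k then dgen n k else 1))
      = (Equiv.Perm.sign σ : ℤ) • (if MMT.Pf σ ≤ e then
          (MvPowerSeries.coeff (R := DField n) (e - MMT.Pf σ)) CT
            * (∏ k, if σ k = k then dgen n k else 1) else 0) := by
    intro σ
    rw [mul_smul_comm, map_zsmul, MvPowerSeries.coeff_mul_monomial]
  rw [Finset.sum_congr rfl fun σ _ => hterm σ, MvPowerSeries.coeff_one]
  by_cases hbal : ∀ k : Fin n, colIn n e k = rowOut n e k
  · -- balanced case
    have hclaim : ∀ σ : Equiv.Perm (Fin n),
        (Equiv.Perm.sign σ : ℤ) • (if MMT.Pf σ ≤ e then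
          (MvPowerSeries.coeff (R := DField n) (e - MMT.Pf σ)) CT
            * (∏ k, if σ k = k then dgen n k else 1) else 0)
        = ((-1 : DField n) ^ totDeg n e * ∏ k, dgen n k ^ (-(colIn n e k : ℤ)))
          * (((if MMT.Pm σ ≤ MMT.qOf e
                then MMT.w σ * MMT.Nn (MMT.qOf e - MMT.Pm σ) else 0 : ℤ) : DField n)) := by
      intro σ
      by_cases hle : MMT.Pf σ ≤ e
      · rw [if_pos hle, if_pos (MMT.Pf_le_iff.1 hle)]
        have hbal' : ∀ k : Fin n, colIn n (e - MMT.Pf σ) k = rowOut n (e - MMT.Pf σ) k := by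
          intro k
          have h1 := MMT.colIn_sub hle k
          have h2 := MMT.rowOut_sub hle k
          have h3 := hbal k
          omega
        have hcard : σ.support.card ≤ totDeg n e := by
          have := MMT.totDeg_sub hle
          omega
        have htd : totDeg n (e - MMT.Pf σ) = totDeg n e - σ.support.card := by
          have := MMT.totDeg_sub hle
          omega
        have hNc : (∏ k, colMultinomial n (e - MMT.Pf σ) k) = MMT.Nn (MMT.qOf e - MMT.Pm σ) := by
          rw [← MMT.Nn_qOf, MMT.qOf_sub]
        have hzpow : (∏ k, dgen n k ^ (-(colIn n (e - MMT.Pf σ) k : ℤ) - 1))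
            * (∏ k, if σ k = k then dgen n k else 1)
            = ∏ k, dgen n k ^ (-(colIn n e k : ℤ)) := by
          rw [← Finset.prod_mul_distrib]
          refine Finset.prod_congr rfl fun k _ => ?_
          have hc := MMT.colIn_sub hle k
          by_cases hfix : σ k = k
          · rw [if_pos hfix] at hc ⊢
            rw [add_zero] at hc
            rw [hc, ← zpow_add_one₀ (hd0 k)]
            congr 1
            ring
          · rw [if_neg hfix] at hc ⊢
            rw [mul_one]
            have hcast : (-(colIn n (e - MMT.Pf σ) k : ℤ) - 1) = -(colIn n e k : ℤ) := by
              omega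
            rw [hcast]
        rw [hCT (e - MMT.Pf σ), if_pos hbal', hNc, htd, MMT.neg_one_pow_sub hcard]
        rw [zsmul_eq_mul]
        push_cast [MMT.w]
        rw [← hzpow]
        ring
      · rw [if_neg hle, if_neg (fun h => hle (MMT.Pf_le_iff.2 h))]
        simp
    rw [Finset.sum_congr rfl fun σ _ => hclaim σ, ← Finset.mul_sum, ← Int.cast_sum]
    by_cases he : e = 0
    · subst he
      have hsum : (∑ σ : Equiv.Perm (Fin n),
          if MMT.Pm σ ≤ MMT.qOf (0 : OffDiag n →₀ ℕ)
          then MMT.w σ * MMT.Nn (MMT.qOf 0 - MMT.Pm σ) else 0) = 1 := by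
        rw [Finset.sum_eq_single 1]
        · rw [if_pos]
          · rw [MMT.Nn_of_zero]
            simp [MMT.w]
          · intro i k
            rw [MMT.Pm, if_neg]
            · exact Nat.zero_le _
            · rintro ⟨-, h2⟩
              exact h2 rfl
        · intro σ _ hσ
          refine if_neg fun h => ?_
          have : ∃ k, σ k ≠ k := by
            by_contra hc
            push_neg at hc
            exact hσ (Equiv.ext hc)
          obtain ⟨k, hk⟩ := this
          have := h (σ k) k
          rw [MMT.Pm, if_pos ⟨rfl, hk⟩] at this
          simp [MMT.qOf, hk] at this
          exact Nat.not_succ_le_zero 0 this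
        · simp
      rw [hsum]
      have h0 : totDeg n (0 : OffDiag n →₀ ℕ) = 0 := by simp [totDeg]
      have h1 : ∀ k, colIn n (0 : OffDiag n →₀ ℕ) k = 0 := by
        intro k
        unfold colIn
        refine Finset.sum_eq_zero fun i _ => ?_
        split <;> simp <;> rfl
      rw [if_pos rfl, h0]
      rw [Finset.prod_congr rfl fun k _ => by rw [h1 k]]
      simp
    · -- balanced, nonzero: the master combinatorial identity
      have hpos : 0 < MMT.tot (MMT.qOf e) := by
        rw [MMT.tot_qOf]
        rcases Finsupp.ne_iff.1 he with ⟨p, hp⟩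
        have hp' : 0 < e p := Nat.pos_of_ne_zero (by simpa using hp)
        exact lt_of_lt_of_le hp'
          (Finset.single_le_sum (f := fun p => e p) (fun _ _ => Nat.zero_le _)
            (Finset.mem_univ p))
      rw [MMT.TOP (MMT.qOf_diag e) (fun k => by rw [MMT.inD_qOf, MMT.outD_qOf, hbal k]) hpos]
      rw [if_neg he]
      push_cast
      rw [mul_zero]
  · -- unbalanced case
    have he : e ≠ 0 := by
      intro h
      apply hbal
      intro k
      subst h
      have hc0 : colIn n (0 : OffDiag n →₀ ℕ) k = 0 :=
        Finset.sum_eq_zero fun i _ => by split <;> simp <;> rfl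
      have hr0 : rowOut n (0 : OffDiag n →₀ ℕ) k = 0 :=
        Finset.sum_eq_zero fun j _ => by split <;> simp <;> rfl
      rw [hc0, hr0]
    rw [if_neg he]
    refine Finset.sum_eq_zero fun σ _ => ?_
    by_cases hle : MMT.Pf σ ≤ e
    · rw [if_pos hle, hCT (e - MMT.Pf σ), if_neg, zero_mul]
      · simp
      intro hb
      apply hbal
      intro k
      have h1 := MMT.colIn_sub hle k
      have h2 := MMT.rowOut_sub hle k
      have h3 := hb k
      omega
    · rw [if_neg hle]
      simp
end
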